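/- arXiv:2203.14173 — 4 statements merged into one kernel-verified Lean document; each statement's English description precedes it below -/
import Mathlib

section
/- The origami flip graph OFG(A_{2n}) is connected: for any two valid MV assignments μ, ν of A_{2n}, there is a finite sequence of face flips transforming μ into ν such that every intermediate assignment is valid. -/
/-- The cyclically next crease index: `k + 1` taken modulo `2n`. -/
def nextCrease {n : ℕ} (k : Fin (2 * n)) : Fin (2 * n) :=
  ⟨(k.val + 1) % (2 * n), Nat.mod_lt _ (Nat.lt_of_le_of_lt (Nat.zero_le _) k.isLt)⟩

/-- Flipping face `α_k`: negate the MV assignment on the two bordering creases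
`e_k` and `e_{k+1}` (indices taken cyclically mod `2n`). -/
def faceFlip {n : ℕ} (k : Fin (2 * n)) (μ : Fin (2 * n) → ℤ) : Fin (2 * n) → ℤ :=
  fun i => if i = k ∨ i = nextCrease k then -μ i else μ i

/-- Applying a finite sequence of face flips in order. -/
def applyFlips {n : ℕ} (L : List (Fin (2 * n))) (μ : Fin (2 * n) → ℤ) : Fin (2 * n) → ℤ :=
  L.foldl (fun η k => faceFlip k η) μ

/-- A valid MV assignment of `A_{2n}`: sum of creases is `±2` (Maekawa). -/
def ValidSum {n : ℕ} (μ : Fin (2 * n) → ℤ) : Prop :=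
  (∑ i, μ i) = 2 ∨ (∑ i, μ i) = -2

namespace Stmt6

variable {n : ℕ}

def MV (μ : Fin (2 * n) → ℤ) : Prop := ∀ i, μ i = 1 ∨ μ i = -1

def Reach (μ ν : Fin (2 * n) → ℤ) : Prop :=
  ∃ L : List (Fin (2 * n)),
      (∀ M : List (Fin (2 * n)), M <+: L → ValidSum (applyFlips M μ)) ∧
      applyFlips L μ = ν

lemma applyFlips_cons (k : Fin (2 * n)) (L : List (Fin (2 * n))) (μ : Fin (2 * n) → ℤ) :
    applyFlips (k :: L) μ = applyFlips L (faceFlip k μ) := rfl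

lemma applyFlips_append (L₁ L₂ : List (Fin (2 * n))) (μ : Fin (2 * n) → ℤ) :
    applyFlips (L₁ ++ L₂) μ = applyFlips L₂ (applyFlips L₁ μ) :=
  List.foldl_append

lemma faceFlip_faceFlip (k : Fin (2 * n)) (μ : Fin (2 * n) → ℤ) :
    faceFlip k (faceFlip k μ) = μ := by
  funext i; unfold faceFlip; by_cases h : i = k ∨ i = nextCrease k <;> simp [h]

lemma Reach.refl {μ : Fin (2 * n) → ℤ} (h : ValidSum μ) : Reach μ μ := by
  refine ⟨[], fun M hM => ?_, rfl⟩
  rw [List.prefix_nil.mp hM]; exact h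

lemma prefix_append_cases {α : Type*} {M L₁ L₂ : List α} (h : M <+: L₁ ++ L₂) :
    M <+: L₁ ∨ ∃ M', M = L₁ ++ M' ∧ M' <+: L₂ := by
  induction L₁ generalizing M with
  | nil => exact Or.inr ⟨M, rfl, h⟩
  | cons a L₁ ih =>
    cases M with
    | nil => exact Or.inl (List.nil_prefix)
    | cons b M =>
      rw [List.cons_append, List.cons_prefix_cons] at h
      obtain ⟨rfl, h⟩ := h
      rcases ih h with h' | ⟨M', rfl, h'⟩
      · exact Or.inl (List.cons_prefix_cons.mpr ⟨rfl, h'⟩)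
      · exact Or.inr ⟨M', rfl, h'⟩

lemma Reach.trans {μ ν η : Fin (2 * n) → ℤ} (h₁ : Reach μ ν) (h₂ : Reach ν η) :
    Reach μ η := by
  obtain ⟨L₁, hp₁, rfl⟩ := h₁
  obtain ⟨L₂, hp₂, rfl⟩ := h₂
  refine ⟨L₁ ++ L₂, fun M hM => ?_, (applyFlips_append _ _ _)⟩
  rcases prefix_append_cases hM with h | ⟨M', rfl, h⟩
  · exact hp₁ M h
  · rw [applyFlips_append]; exact hp₂ M' h

lemma Reach.single {μ : Fin (2 * n) → ℤ} (k : Fin (2 * n)) (h₁ : ValidSum μ)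
    (h₂ : ValidSum (faceFlip k μ)) : Reach μ (faceFlip k μ) := by
  refine ⟨[k], fun M hM => ?_, rfl⟩
  cases M with
  | nil => exact h₁
  | cons b M =>
    rw [List.cons_prefix_cons] at hM
    obtain ⟨rfl, hM⟩ := hM
    rw [List.prefix_nil.mp hM]
    exact h₂

lemma Reach.symm {μ ν : Fin (2 * n) → ℤ} (h : Reach μ ν) : Reach ν μ := by
  obtain ⟨L, hp, rfl⟩ := h
  induction L generalizing μ with
  | nil => exact Reach.refl (hp [] (List.nil_prefix))
  | cons k L ih =>
    have h1 : ValidSum μ := hp [] (List.nil_prefix)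
    have h2 : ValidSum (faceFlip k μ) := by
      have := hp [k] ⟨L, rfl⟩
      simpa [applyFlips] using this
    have step : Reach (faceFlip k μ) μ := by
      have := Reach.single (μ := faceFlip k μ) k h2 (by rwa [faceFlip_faceFlip])
      rwa [faceFlip_faceFlip] at this
    have tail : Reach (applyFlips L (faceFlip k μ)) (faceFlip k μ) :=
      ih (μ := faceFlip k μ) (fun M hM => by
        have := hp (k :: M) (List.cons_prefix_cons.mpr ⟨rfl, hM⟩)
        simpa [applyFlips_cons] using this)
    exact (applyFlips_cons k L μ ▸ tail).trans step


lemma nextCrease_ne (k : Fin (2 * n)) : nextCrease k ≠ k := by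
  intro h
  have hv : (k.val + 1) % (2 * n) = k.val := congrArg Fin.val h
  have hk := k.isLt
  rcases Nat.lt_or_ge (k.val + 1) (2 * n) with h' | h'
  · rw [Nat.mod_eq_of_lt h'] at hv; omega
  · have : k.val + 1 = 2 * n := by omega
    rw [this, Nat.mod_self] at hv
    omega

lemma faceFlip_mv {μ : Fin (2 * n) → ℤ} (hμ : MV μ) (k : Fin (2 * n)) :
    MV (faceFlip k μ) := by
  intro i
  unfold faceFlip
  rcases hμ i with h | h <;> by_cases h' : i = k ∨ i = nextCrease k <;> simp [h, h']

lemma sum_faceFlip (k : Fin (2 * n)) (μ : Fin (2 * n) → ℤ) :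
    ∑ i, faceFlip k μ i = (∑ i, μ i) - 2 * μ k - 2 * μ (nextCrease k) := by
  have hne := nextCrease_ne k
  have key : ∀ i, faceFlip k μ i =
      μ i + ((if i = k then -2 * μ k else 0) + (if i = nextCrease k then -2 * μ (nextCrease k) else 0)) := by
    intro i
    unfold faceFlip
    by_cases h1 : i = k
    · subst h1
      rw [if_pos (Or.inl rfl), if_pos rfl, if_neg (fun h => hne h.symm)]
      ring
    · by_cases h2 : i = nextCrease k
      · subst h2
        rw [if_pos (Or.inr rfl), if_neg hne, if_pos rfl]
        ring
      · rw [if_neg (by tauto), if_neg h1, if_neg h2]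
        ring
  rw [Finset.sum_congr rfl (fun i _ => key i)]
  rw [Finset.sum_add_distrib, Finset.sum_add_distrib, Finset.sum_ite_eq' Finset.univ k,
    Finset.sum_ite_eq' Finset.univ (nextCrease k)]
  simp; ring

/-- number of -1 creases -/
def pcount (μ : Fin (2 * n) → ℤ) : ℕ := (Finset.univ.filter fun i => μ i = -1).card

lemma sum_eq_mv {μ : Fin (2 * n) → ℤ} (hμ : MV μ) :
    (∑ i, μ i) = (2 * n : ℤ) - 2 * pcount μ := by
  classical
  have h := Finset.sum_filter_add_sum_filter_not Finset.univ (fun i => μ i = -1) μ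
  have h1 : ∑ i ∈ Finset.univ.filter (fun i => μ i = -1), μ i = -(pcount μ : ℤ) := by
    calc ∑ i ∈ Finset.univ.filter (fun i => μ i = -1), μ i
        = ∑ _i ∈ Finset.univ.filter (fun i => μ i = -1), (-1 : ℤ) :=
          Finset.sum_congr rfl (fun i hi => (Finset.mem_filter.mp hi).2)
      _ = -(pcount μ : ℤ) := by simp [pcount]
  have h2 : ∑ i ∈ Finset.univ.filter (fun i => ¬ μ i = -1), μ i
      = ((Finset.univ.filter (fun i => ¬ μ i = -1)).card : ℤ) := by
    calc ∑ i ∈ Finset.univ.filter (fun i => ¬ μ i = -1), μ i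
        = ∑ _i ∈ Finset.univ.filter (fun i => ¬ μ i = -1), (1 : ℤ) :=
          Finset.sum_congr rfl (fun i hi =>
            (hμ i).resolve_right (Finset.mem_filter.mp hi).2)
      _ = _ := by simp
  have h3 := Finset.card_filter_add_card_filter_not (s := Finset.univ)
    (p := fun i : Fin (2 * n) => μ i = -1)
  simp only [Finset.card_univ, Fintype.card_fin] at h3
  rw [← h, h1, h2]
  have : (Finset.univ.filter (fun i : Fin (2 * n) => ¬ μ i = -1)).card = 2 * n - pcount μ := by
    unfold pcount; omega
  rw [this]
  have hle : pcount μ ≤ 2 * n := by unfold pcount at *; omega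
  push_cast [Nat.cast_sub hle]
  ring

def canon (p : ℕ) : Fin (2 * n) → ℤ := fun i => if i.val < p then -1 else 1

lemma canon_mv (p : ℕ) : MV (canon (n := n) p) := by
  intro i; unfold canon; by_cases h : i.val < p <;> simp [h]

lemma card_filter_lt (v : ℕ) (hv : v ≤ 2 * n) :
    (Finset.univ.filter fun i : Fin (2 * n) => i.val < v).card = v := by
  induction v with
  | zero => simp
  | succ v ih =>
    have hv' : v < 2 * n := by omega
    have : (Finset.univ.filter fun i : Fin (2 * n) => i.val < v + 1)
        = insert ⟨v, hv'⟩ (Finset.univ.filter fun i : Fin (2 * n) => i.val < v) := by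
      ext i
      simp [Finset.mem_filter, Fin.ext_iff]
      omega
    rw [this, Finset.card_insert_of_notMem (by simp), ih (by omega)]

lemma pcount_canon (p : ℕ) (hp : p ≤ 2 * n) : pcount (canon (n := n) p) = p := by
  unfold pcount
  rw [show (Finset.univ.filter fun i => canon (n := n) p i = -1)
      = Finset.univ.filter fun i : Fin (2 * n) => i.val < p from ?_]
  · exact card_filter_lt p hp
  · apply Finset.filter_congr
    intro i _
    unfold canon
    by_cases h : i.val < p <;> simp [h]

lemma sum_canon (p : ℕ) (hp : p ≤ 2 * n) :
    (∑ i, canon (n := n) p i) = (2 * n : ℤ) - 2 * p := by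
  rw [sum_eq_mv (canon_mv p), pcount_canon p hp]

def phi (μ : Fin (2 * n) → ℤ) : ℕ := ∑ i, (if μ i = -1 then i.val else 0)

lemma pcount_eq_of_sum_eq {μ ν : Fin (2 * n) → ℤ} (hμ : MV μ) (hν : MV ν)
    (h : (∑ i, μ i) = ∑ i, ν i) : pcount μ = pcount ν := by
  have h1 := sum_eq_mv hμ
  have h2 := sum_eq_mv hν
  rw [h1, h2] at h
  omega

lemma next_of_adj (a j : Fin (2 * n)) (h : a.val + 1 = j.val) : nextCrease a = j := by
  apply Fin.ext
  show (a.val + 1) % (2 * n) = j.val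
  rw [h, Nat.mod_eq_of_lt j.isLt]

lemma flip_adj_vals {μ : Fin (2 * n) → ℤ} (a j : Fin (2 * n)) (hadj : a.val + 1 = j.val)
    (hjm : μ j = -1) (ham : μ a = 1) :
    faceFlip a μ a = -1 ∧ faceFlip a μ j = 1 ∧
      (∀ i, i ≠ a → i ≠ j → faceFlip a μ i = μ i) := by
  have hnext := next_of_adj a j hadj
  refine ⟨?_, ?_, ?_⟩
  · show (if a = a ∨ a = nextCrease a then -μ a else μ a) = -1
    rw [if_pos (Or.inl rfl), ham]
  · show (if j = a ∨ j = nextCrease a then -μ j else μ j) = 1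
    rw [if_pos (Or.inr hnext.symm), hjm]; ring
  · intro i h1 h2
    show (if i = a ∨ i = nextCrease a then -μ i else μ i) = μ i
    rw [if_neg (by rw [hnext]; tauto)]

lemma sum_flip_adj {μ : Fin (2 * n) → ℤ} (a j : Fin (2 * n)) (hadj : a.val + 1 = j.val)
    (hjm : μ j = -1) (ham : μ a = 1) :
    (∑ i, faceFlip a μ i) = ∑ i, μ i := by
  have hnext := next_of_adj a j hadj
  rw [sum_faceFlip, hnext, hjm, ham]
  ring

lemma phi_flip_lt {μ : Fin (2 * n) → ℤ} (a j : Fin (2 * n)) (hadj : a.val + 1 = j.val)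
    (hjm : μ j = -1) (ham : μ a = 1) : phi (faceFlip a μ) < phi μ := by
  obtain ⟨hfa, hfj, hoff⟩ := flip_adj_vals a j hadj hjm ham
  have hane : j ≠ a := by intro h; rw [h] at hadj; omega
  have hmem1 : a ∈ Finset.univ := Finset.mem_univ a
  have hmem2 : j ∈ Finset.univ.erase a := Finset.mem_erase.mpr ⟨hane, Finset.mem_univ j⟩
  have key : ∀ ν : Fin (2 * n) → ℤ,
      phi ν = (∑ i ∈ (Finset.univ.erase a).erase j, (if ν i = -1 then i.val else 0))
        + (if ν j = -1 then j.val else 0) + (if ν a = -1 then a.val else 0) := by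
    intro ν
    unfold phi
    rw [← Finset.sum_erase_add Finset.univ _ hmem1, ← Finset.sum_erase_add _ _ hmem2]
  have hrest : (∑ i ∈ (Finset.univ.erase a).erase j, (if faceFlip a μ i = -1 then i.val else 0))
      = ∑ i ∈ (Finset.univ.erase a).erase j, (if μ i = -1 then i.val else 0) := by
    apply Finset.sum_congr rfl
    intro i hi
    have h1 : i ≠ j := (Finset.mem_erase.mp hi).1
    have h2 : i ≠ a := (Finset.mem_erase.mp (Finset.mem_erase.mp hi).2).1
    rw [hoff i h2 h1]
  have e1 := key (faceFlip a μ)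
  have e2 := key μ
  rw [hrest, hfa, hfj] at e1
  rw [hjm, ham] at e2
  simp only [if_pos rfl] at e1 e2
  norm_num at e1 e2
  omega

lemma eq_canon_of_no_descent {μ : Fin (2 * n) → ℤ} (hμ : MV μ)
    (H : ∀ a j : Fin (2 * n), a.val + 1 = j.val → μ j = -1 → μ a = -1) :
    μ = canon (pcount μ) := by
  have down : ∀ d (j : Fin (2 * n)), μ j = -1 → ∀ i : Fin (2 * n), i.val + d = j.val →
      μ i = -1 := by
    intro d
    induction d with
    | zero =>
      intro j hj i hi
      rwa [show i = j from Fin.ext (by omega)]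
    | succ d ih =>
      intro j hj i hi
      have hlt : j.val - 1 < 2 * n := lt_of_le_of_lt (Nat.sub_le _ _) j.isLt
      have hma : μ ⟨j.val - 1, hlt⟩ = -1 := H ⟨j.val - 1, hlt⟩ j (by simp; omega) hj
      exact ih ⟨j.val - 1, hlt⟩ hma i (by simp; omega)
  funext i
  by_cases hi : i.val < pcount μ
  · rcases hμ i with h1 | h1
    · exfalso
      have hsub : (Finset.univ.filter fun j => μ j = -1)
          ⊆ Finset.univ.filter (fun j : Fin (2 * n) => j.val < i.val) := by
        intro j hj
        simp only [Finset.mem_filter, Finset.mem_univ, true_and] at hj ⊢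
        by_contra hcon
        push_neg at hcon
        have h2 : μ i = -1 := down (j.val - i.val) j hj i (by omega)
        omega
      have hcard := Finset.card_le_card hsub
      rw [card_filter_lt i.val (le_of_lt i.isLt)] at hcard
      unfold pcount at hi
      omega
    · simp [canon, hi, h1]
  · rcases hμ i with h1 | h1
    · simp [canon, hi, h1]
    · exfalso
      have hsub : (Finset.univ.filter fun j : Fin (2 * n) => j.val < i.val + 1)
          ⊆ Finset.univ.filter fun j => μ j = -1 := by
        intro j hj
        simp only [Finset.mem_filter, Finset.mem_univ, true_and] at hj ⊢
        exact down (i.val - j.val) i h1 j (by omega)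
      have hcard := Finset.card_le_card hsub
      rw [card_filter_lt (i.val + 1) i.isLt] at hcard
      unfold pcount at hi
      omega

lemma phi_ge {μ : Fin (2 * n) → ℤ} (j : Fin (2 * n)) (hj : μ j = -1) : j.val ≤ phi μ := by
  have h := Finset.single_le_sum (f := fun i : Fin (2 * n) => if μ i = -1 then i.val else 0)
    (fun i _ => Nat.zero_le _) (Finset.mem_univ j)
  simp only [hj, if_pos rfl] at h
  exact h

lemma toCanon : ∀ (m : ℕ) (μ : Fin (2 * n) → ℤ), MV μ → ValidSum μ → phi μ ≤ m →
    Reach μ (canon (pcount μ)) := by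
  intro m
  induction m with
  | zero =>
    intro μ hμ hv hφ
    have H : ∀ a j : Fin (2 * n), a.val + 1 = j.val → μ j = -1 → μ a = -1 := by
      intro a j hadj hjm
      have := phi_ge j hjm
      omega
    rw [← eq_canon_of_no_descent hμ H]
    exact Reach.refl hv
  | succ m ih =>
    intro μ hμ hv hφ
    by_cases hd : ∃ j : Fin (2 * n), 1 ≤ j.val ∧ μ j = -1 ∧
        μ ⟨j.val - 1, lt_of_le_of_lt (Nat.sub_le _ _) j.isLt⟩ = 1
    · obtain ⟨j, hj1, hjm, ham⟩ := hd
      set a : Fin (2 * n) := ⟨j.val - 1, lt_of_le_of_lt (Nat.sub_le _ _) j.isLt⟩ with ha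
      have hadj : a.val + 1 = j.val := by simp [ha]; omega
      have hsum := sum_flip_adj a j hadj hjm ham
      have hmv' := faceFlip_mv hμ a
      have hv' : ValidSum (faceFlip a μ) := by
        unfold ValidSum at *
        rw [hsum]
        exact hv
      have hlt := phi_flip_lt a j hadj hjm ham
      have hr := ih (faceFlip a μ) hmv' hv' (by omega)
      rw [pcount_eq_of_sum_eq hmv' hμ hsum] at hr
      exact (Reach.single a hv hv').trans hr
    · push_neg at hd
      have H : ∀ a j : Fin (2 * n), a.val + 1 = j.val → μ j = -1 → μ a = -1 := by
        intro a j hadj hjm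
        rcases hμ a with h1 | h1
        · exfalso
          have h2 := hd j (by omega) hjm
          rw [show (⟨j.val - 1, lt_of_le_of_lt (Nat.sub_le _ _) j.isLt⟩ : Fin (2 * n)) = a
            from Fin.ext (by simp; omega)] at h2
          exact h2 h1
        · exact h1
      rw [← eq_canon_of_no_descent hμ H]
      exact Reach.refl hv

lemma canon_cross (hn : 1 ≤ n) : Reach (canon (n := n) (n - 1)) (canon (n + 1)) := by
  have hk : n - 1 < 2 * n := by omega
  have hnn : n < 2 * n := by omega
  set k : Fin (2 * n) := ⟨n - 1, hk⟩ with hkdef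
  have hnext : nextCrease k = ⟨n, hnn⟩ := by
    apply Fin.ext
    show (k.val + 1) % (2 * n) = n
    have : k.val = n - 1 := rfl
    rw [this, show n - 1 + 1 = n by omega, Nat.mod_eq_of_lt hnn]
  have hflip : faceFlip k (canon (n - 1)) = canon (n + 1) := by
    funext i
    show (if i = k ∨ i = nextCrease k then -(canon (n - 1) i) else canon (n - 1) i)
        = canon (n + 1) i
    rw [hnext]
    unfold canon
    by_cases hc : i = k ∨ i = (⟨n, hnn⟩ : Fin (2 * n))
    · rw [if_pos hc]
      have hval : i.val = n - 1 ∨ i.val = n := by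
        rcases hc with h | h <;> rw [h] <;> [left; right] <;> rfl
      rcases hval with h | h <;> rw [h] <;> split_ifs <;> first | omega | norm_num
    · rw [if_neg hc]
      push_neg at hc
      have h1 : i.val ≠ n - 1 := fun h => hc.1 (Fin.ext h)
      have h2 : i.val ≠ n := fun h => hc.2 (Fin.ext h)
      split_ifs <;> first | rfl | omega
  have hv1 : ValidSum (canon (n := n) (n - 1)) := by
    left
    rw [sum_canon (n - 1) (by omega)]
    have : ((n - 1 : ℕ) : ℤ) = (n : ℤ) - 1 := by omega
    rw [this]
    push_cast
    ring
  have hv2 : ValidSum (canon (n := n) (n + 1)) := by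
    right
    rw [sum_canon (n + 1) (by omega)]
    push_cast
    ring
  have := Reach.single k hv1 (by rw [hflip]; exact hv2)
  rwa [hflip] at this

end Stmt6


/-- `OFG(A_{2n})` is connected: any two valid MV assignments are joined by a
finite sequence of face flips all of whose intermediate assignments are valid. -/
theorem stmt_6 (n : ℕ) (hn : 1 ≤ n) (μ ν : Fin (2 * n) → ℤ)
    (hμmv : ∀ i, μ i = 1 ∨ μ i = -1) (hνmv : ∀ i, ν i = 1 ∨ ν i = -1)
    (hμvalid : ValidSum μ) (hνvalid : ValidSum ν) :
    ∃ L : List (Fin (2 * n)),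
      (∀ M : List (Fin (2 * n)), M <+: L → ValidSum (applyFlips M μ)) ∧
      applyFlips L μ = ν := by
  have hμ' : Stmt6.MV μ := hμmv
  have hν' : Stmt6.MV ν := hνmv
  have hpμ : Stmt6.pcount μ = n - 1 ∨ Stmt6.pcount μ = n + 1 := by
    have hs := Stmt6.sum_eq_mv hμ'
    rcases hμvalid with h | h <;> rw [hs] at h <;> omega
  have hpν : Stmt6.pcount ν = n - 1 ∨ Stmt6.pcount ν = n + 1 := by
    have hs := Stmt6.sum_eq_mv hν'
    rcases hνvalid with h | h <;> rw [hs] at h <;> omega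
  have h1 : Stmt6.Reach μ (Stmt6.canon (Stmt6.pcount μ)) :=
    Stmt6.toCanon (Stmt6.phi μ) μ hμ' hμvalid le_rfl
  have h2 : Stmt6.Reach ν (Stmt6.canon (Stmt6.pcount ν)) :=
    Stmt6.toCanon (Stmt6.phi ν) ν hν' hνvalid le_rfl
  have hv1 : ValidSum (Stmt6.canon (n := n) (n - 1)) := by
    left
    rw [Stmt6.sum_canon (n - 1) (by omega)]
    have : ((n - 1 : ℕ) : ℤ) = (n : ℤ) - 1 := by omega
    rw [this]; push_cast; ring
  have hv2 : ValidSum (Stmt6.canon (n := n) (n + 1)) := by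
    right
    rw [Stmt6.sum_canon (n + 1) (by omega)]
    push_cast; ring
  have hcc : Stmt6.Reach (Stmt6.canon (n := n) (Stmt6.pcount μ)) (Stmt6.canon (Stmt6.pcount ν)) := by
    rcases hpμ with e1 | e1 <;> rcases hpν with e2 | e2 <;> rw [e1, e2]
    · exact Stmt6.Reach.refl hv1
    · exact Stmt6.canon_cross hn
    · exact (Stmt6.canon_cross hn).symm
    · exact Stmt6.Reach.refl hv2
  exact (h1.trans hcc).trans h2.symm
end

section
/- For any two valid MV assignments μ, ν of A_{2n}, there is a sequence of at most n face flips transforming μ into ν through valid assignments; i.e., the distance between μ and ν in OFG(A_{2n}) is at most n. -/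
namespace Stmt7Aux

variable {n : ℕ}

/-- The cyclically previous crease. -/
def prevC (i : Fin (2 * n)) : Fin (2 * n) :=
  ⟨(i.val + (2 * n - 1)) % (2 * n), Nat.mod_lt _ i.pos⟩

lemma prev_next (k : Fin (2 * n)) : prevC (nextCrease k) = k := by
  have hlt := k.isLt
  apply Fin.ext
  show ((k.val + 1) % (2 * n) + (2 * n - 1)) % (2 * n) = k.val
  rw [Nat.mod_add_mod]
  have h : k.val + 1 + (2 * n - 1) = k.val + 2 * n := by omega
  rw [h, Nat.add_mod_right, Nat.mod_eq_of_lt hlt]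

lemma next_prev (i : Fin (2 * n)) : nextCrease (prevC i) = i := by
  have hlt := i.isLt
  apply Fin.ext
  show ((i.val + (2 * n - 1)) % (2 * n) + 1) % (2 * n) = i.val
  rw [Nat.mod_add_mod]
  have h : i.val + (2 * n - 1) + 1 = i.val + 2 * n := by omega
  rw [h, Nat.add_mod_right, Nat.mod_eq_of_lt hlt]

lemma next_ne (k : Fin (2 * n)) : nextCrease k ≠ k := by
  intro h
  have hv : (k.val + 1) % (2 * n) = k.val := congrArg Fin.val h
  have hlt := k.isLt
  rcases Nat.lt_or_ge (k.val + 1) (2 * n) with h1 | h1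
  · rw [Nat.mod_eq_of_lt h1] at hv; omega
  · have h2 : k.val + 1 = 2 * n := by omega
    rw [h2, Nat.mod_self] at hv; omega

lemma prev_ne (i : Fin (2 * n)) : prevC i ≠ i := by
  intro h
  have h2 := next_prev i
  rw [h] at h2
  exact next_ne i h2

/-- Whether crease `i` is toggled by flipping all faces of `F`. -/
def Tog (F : Finset (Fin (2 * n))) (i : Fin (2 * n)) : Prop :=
  ¬ (i ∈ F ↔ prevC i ∈ F)

instance (F : Finset (Fin (2 * n))) : DecidablePred (Tog F) := fun i => by
  unfold Tog; infer_instance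

/-- The result of flipping all faces of `F` simultaneously. -/
def flipSet (F : Finset (Fin (2 * n))) (η : Fin (2 * n) → ℤ) : Fin (2 * n) → ℤ :=
  fun i => if Tog F i then -η i else η i

lemma flipSet_compl (F : Finset (Fin (2 * n))) (η : Fin (2 * n) → ℤ) :
    flipSet Fᶜ η = flipSet F η := by
  funext i
  have h : Tog Fᶜ i ↔ Tog F i := by
    unfold Tog; simp only [Finset.mem_compl]; tauto
  by_cases ht : Tog F i
  · rw [flipSet, flipSet, if_pos (h.mpr ht), if_pos ht]
  · rw [flipSet, flipSet, if_neg (fun hc => ht (h.mp hc)), if_neg ht]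

lemma flipSet_empty (η : Fin (2 * n) → ℤ) : flipSet (∅ : Finset (Fin (2 * n))) η = η := by
  funext i; simp [flipSet, Tog]

lemma flipSet_erase {F : Finset (Fin (2 * n))} {k : Fin (2 * n)} (hk : k ∈ F)
    (η : Fin (2 * n) → ℤ) :
    flipSet F η = flipSet (F.erase k) (faceFlip k η) := by
  funext i
  have hiff : (i = k ∨ i = nextCrease k) ↔ (i = k ∨ prevC i = k) := by
    constructor
    · rintro (rfl | rfl)
      · exact Or.inl rfl
      · exact Or.inr (prev_next k)
    · rintro (rfl | h)
      · exact Or.inl rfl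
      · exact Or.inr (by rw [← h, next_prev])
  simp only [flipSet, Tog, faceFlip, Finset.mem_erase, hiff]
  by_cases h1 : i = k
  · subst h1
    by_cases hB : prevC i ∈ F <;> simp [prev_ne i, hk, hB]
  · by_cases h2 : prevC i = k
    · subst h2
      by_cases hA : i ∈ F <;> simp [h1, hk, hA, Ne.symm h1]
    · by_cases hA : i ∈ F <;> by_cases hB : prevC i ∈ F <;>
        simp [h1, h2, hA, hB]

lemma faceFlip_mv {k : Fin (2 * n)} {η : Fin (2 * n) → ℤ}
    (hmv : ∀ i, η i = 1 ∨ η i = -1) : ∀ i, faceFlip k η i = 1 ∨ faceFlip k η i = -1 := by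
  intro i
  unfold faceFlip
  split
  · rcases hmv i with h | h <;> simp [h]
  · exact hmv i

lemma sum_faceFlip (k : Fin (2 * n)) (η : Fin (2 * n) → ℤ) :
    ∑ i, faceFlip k η i = (∑ i, η i) - 2 * η k - 2 * η (nextCrease k) := by
  have hne := next_ne k
  have hpt : ∀ i, faceFlip k η i =
      η i + ((if i = k then -2 * η k else 0) + (if i = nextCrease k then -2 * η (nextCrease k) else 0)) := by
    intro i
    unfold faceFlip
    by_cases h1 : i = k
    · subst h1
      have h2 : ¬ (i = nextCrease i) := fun hc => hne hc.symm
      simp [h2]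
      ring
    · by_cases h2 : i = nextCrease k
      · subst h2
        simp [h1]
        ring
      · simp [h1, h2]
  rw [Finset.sum_congr rfl (fun i _ => hpt i), Finset.sum_add_distrib, Finset.sum_add_distrib,
    Finset.sum_ite_eq' Finset.univ k (fun _ => -2 * η k),
    Finset.sum_ite_eq' Finset.univ (nextCrease k) (fun _ => -2 * η (nextCrease k))]
  simp only [Finset.mem_univ, if_pos]
  ring

lemma sum_flipSet_neg (F : Finset (Fin (2 * n))) (η : Fin (2 * n) → ℤ)
    (hneg : ∀ i, Tog F i → η i = -1) :
    ∑ i, flipSet F η i = (∑ i, η i) + 2 * ((Finset.univ.filter (Tog F)).card : ℤ) := by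
  have hpt : ∀ i, flipSet F η i = η i + (if Tog F i then (2 : ℤ) else 0) := by
    intro i
    unfold flipSet
    by_cases ht : Tog F i
    · rw [if_pos ht, if_pos ht, hneg i ht]; ring
    · simp [ht]
  rw [Finset.sum_congr rfl (fun i _ => hpt i), Finset.sum_add_distrib, ← Finset.sum_filter,
    Finset.sum_const, nsmul_eq_mul]
  ring

lemma sum_flipSet_pos (F : Finset (Fin (2 * n))) (η : Fin (2 * n) → ℤ)
    (hpos : ∀ i, Tog F i → η i = 1) :
    ∑ i, flipSet F η i = (∑ i, η i) - 2 * ((Finset.univ.filter (Tog F)).card : ℤ) := by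
  have hpt : ∀ i, flipSet F η i = η i + (if Tog F i then (-2 : ℤ) else 0) := by
    intro i
    unfold flipSet
    by_cases ht : Tog F i
    · rw [if_pos ht, if_pos ht, hpos i ht]; ring
    · simp [ht]
  rw [Finset.sum_congr rfl (fun i _ => hpt i), Finset.sum_add_distrib, ← Finset.sum_filter,
    Finset.sum_const, nsmul_eq_mul]
  ring

lemma all_mem (F : Finset (Fin (2 * n))) (hcl : ∀ i, i ∈ F ↔ prevC i ∈ F)
    {k₀ : Fin (2 * n)} (hk₀ : k₀ ∈ F) : ∀ j, j ∈ F := by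
  have hnext : ∀ i, i ∈ F → nextCrease i ∈ F := by
    intro i hi
    exact (hcl (nextCrease i)).mpr (by rwa [prev_next])
  have key : ∀ m : ℕ, (⟨(k₀.val + m) % (2 * n), Nat.mod_lt _ k₀.pos⟩ : Fin (2 * n)) ∈ F := by
    intro m
    induction m with
    | zero =>
      have : (⟨(k₀.val + 0) % (2 * n), Nat.mod_lt _ k₀.pos⟩ : Fin (2 * n)) = k₀ := by
        apply Fin.ext
        simp [Nat.mod_eq_of_lt k₀.isLt]
      rw [this]; exact hk₀
    | succ m ih =>
      have h2 := hnext _ ih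
      have he : nextCrease (⟨(k₀.val + m) % (2 * n), Nat.mod_lt _ k₀.pos⟩ : Fin (2 * n)) =
          ⟨(k₀.val + (m + 1)) % (2 * n), Nat.mod_lt _ k₀.pos⟩ := by
        apply Fin.ext
        show ((k₀.val + m) % (2 * n) + 1) % (2 * n) = (k₀.val + (m + 1)) % (2 * n)
        rw [Nat.mod_add_mod]
        ring_nf
      rwa [he] at h2
  intro j
  have hk := k₀.isLt
  have hj := j.isLt
  have h := key (j.val + 2 * n - k₀.val)
  have hval : (k₀.val + (j.val + 2 * n - k₀.val)) % (2 * n) = j.val := by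
    have h1 : k₀.val + (j.val + 2 * n - k₀.val) = j.val + 2 * n := by omega
    rw [h1, Nat.add_mod_right, Nat.mod_eq_of_lt hj]
  have : (⟨(k₀.val + (j.val + 2 * n - k₀.val)) % (2 * n), Nat.mod_lt _ k₀.pos⟩ : Fin (2 * n)) = j :=
    Fin.ext hval
  rwa [this] at h

lemma exists_good (η : Fin (2 * n) → ℤ) (hmv : ∀ i, η i = 1 ∨ η i = -1)
    (hv : ValidSum η) (F : Finset (Fin (2 * n))) (hne : F.Nonempty)
    (hv2 : ValidSum (flipSet F η)) : ∃ k ∈ F, ValidSum (faceFlip k η) := by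
  by_contra hcon
  push_neg at hcon
  obtain ⟨k₀, hk₀⟩ := hne
  have hNpos : 0 < 2 * n := k₀.pos
  have hcard : (Finset.univ : Finset (Fin (2 * n))).card = 2 * n := by
    simp
  rcases hv with h2 | h2
  · -- sum = 2 case: every face in F has both creases -1
    have hval : ∀ k ∈ F, η k = -1 ∧ η (nextCrease k) = -1 := by
      intro k hk
      have hbad := hcon k hk
      unfold ValidSum at hbad
      push_neg at hbad
      have hs := sum_faceFlip k η
      rcases hmv k with hk1 | hk1 <;> rcases hmv (nextCrease k) with hk2 | hk2
      · exact absurd (by rw [hs, h2, hk1, hk2]; ring) hbad.2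
      · exact absurd (by rw [hs, h2, hk1, hk2]; ring) hbad.1
      · exact absurd (by rw [hs, h2, hk1, hk2]; ring) hbad.1
      · exact ⟨hk1, hk2⟩
    have hneg : ∀ i, Tog F i → η i = -1 := by
      intro i hti
      unfold Tog at hti
      by_cases hiF : i ∈ F
      · exact (hval i hiF).1
      · have hp : prevC i ∈ F := by tauto
        have := (hval _ hp).2
        rwa [next_prev] at this
    have hsum := sum_flipSet_neg F η hneg
    rw [h2] at hsum
    have ht0 : (Finset.univ.filter (Tog F)).card = 0 := by
      rcases hv2 with hv2 | hv2 <;> rw [hsum] at hv2 <;> omega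
    have hcl : ∀ i, i ∈ F ↔ prevC i ∈ F := by
      intro i
      by_contra hc
      have : i ∈ Finset.univ.filter (Tog F) := Finset.mem_filter.mpr ⟨Finset.mem_univ i, hc⟩
      have := Finset.card_pos.mpr ⟨i, this⟩
      omega
    have hall := all_mem F hcl hk₀
    have hsum2 : ∑ i, η i = -(2 * n : ℤ) := by
      rw [Finset.sum_congr rfl (fun i _ => (hval i (hall i)).1), Finset.sum_const, hcard]
      simp
    rw [hsum2] at h2
    omega
  · -- sum = -2 case
    have hval : ∀ k ∈ F, η k = 1 ∧ η (nextCrease k) = 1 := by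
      intro k hk
      have hbad := hcon k hk
      unfold ValidSum at hbad
      push_neg at hbad
      have hs := sum_faceFlip k η
      rcases hmv k with hk1 | hk1 <;> rcases hmv (nextCrease k) with hk2 | hk2
      · exact ⟨hk1, hk2⟩
      · exact absurd (by rw [hs, h2, hk1, hk2]; ring) hbad.2
      · exact absurd (by rw [hs, h2, hk1, hk2]; ring) hbad.2
      · exact absurd (by rw [hs, h2, hk1, hk2]; ring) hbad.1
    have hpos : ∀ i, Tog F i → η i = 1 := by
      intro i hti
      unfold Tog at hti
      by_cases hiF : i ∈ F
      · exact (hval i hiF).1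
      · have hp : prevC i ∈ F := by tauto
        have := (hval _ hp).2
        rwa [next_prev] at this
    have hsum := sum_flipSet_pos F η hpos
    rw [h2] at hsum
    have ht0 : (Finset.univ.filter (Tog F)).card = 0 := by
      rcases hv2 with hv2 | hv2 <;> rw [hsum] at hv2 <;> omega
    have hcl : ∀ i, i ∈ F ↔ prevC i ∈ F := by
      intro i
      by_contra hc
      have : i ∈ Finset.univ.filter (Tog F) := Finset.mem_filter.mpr ⟨Finset.mem_univ i, hc⟩
      have := Finset.card_pos.mpr ⟨i, this⟩
      omega
    have hall := all_mem F hcl hk₀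
    have hsum2 : ∑ i, η i = (2 * n : ℤ) := by
      rw [Finset.sum_congr rfl (fun i _ => (hval i (hall i)).1), Finset.sum_const, hcard]
      simp
    rw [hsum2] at h2
    omega

lemma applyFlips_cons (k : Fin (2 * n)) (L : List (Fin (2 * n))) (η : Fin (2 * n) → ℤ) :
    applyFlips (k :: L) η = applyFlips L (faceFlip k η) := rfl

lemma reach : ∀ (m : ℕ) (F : Finset (Fin (2 * n))), F.card = m →
    ∀ η : Fin (2 * n) → ℤ, (∀ i, η i = 1 ∨ η i = -1) → ValidSum η →
    ValidSum (flipSet F η) →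
    ∃ L : List (Fin (2 * n)), L.length = F.card ∧
      (∀ M, M <+: L → ValidSum (applyFlips M η)) ∧
      applyFlips L η = flipSet F η := by
  intro m
  induction m with
  | zero =>
    intro F hF η hmv hv hv2
    have hFe : F = ∅ := Finset.card_eq_zero.mp hF
    subst hFe
    refine ⟨[], by simp, ?_, by rw [flipSet_empty]; rfl⟩
    intro M hM
    rw [List.prefix_nil.mp hM]
    exact hv
  | succ m ih =>
    intro F hF η hmv hv hv2
    have hne : F.Nonempty := Finset.card_pos.mp (by omega)
    obtain ⟨k, hkF, hkv⟩ := exists_good η hmv hv F hne hv2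
    have hcomm := flipSet_erase hkF η
    have hv2' : ValidSum (flipSet (F.erase k) (faceFlip k η)) := by rwa [hcomm] at hv2
    have hcard : (F.erase k).card = m := by
      rw [Finset.card_erase_of_mem hkF, hF]
      omega
    obtain ⟨L', hlen, hpre, happ⟩ :=
      ih (F.erase k) hcard (faceFlip k η) (faceFlip_mv hmv) hkv hv2'
    refine ⟨k :: L', ?_, ?_, ?_⟩
    · simp [hlen, hcard, hF]
    · intro M hM
      match M with
      | [] => exact hv
      | a :: M' =>
        obtain ⟨rfl, hM'⟩ := List.cons_prefix_cons.mp hM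
        rw [applyFlips_cons]
        exact hpre M' hM'
    · rw [applyFlips_cons, happ, hcomm]

end Stmt7Aux

open Stmt7Aux in
/-- Any two valid MV assignments of `A_{2n}` are joined by a sequence of at
most `n` face flips through valid assignments: the distance in `OFG(A_{2n})` is at most `n`. -/
theorem stmt_7 (n : ℕ) (hn : 1 ≤ n) (μ ν : Fin (2 * n) → ℤ)
    (hμmv : ∀ i, μ i = 1 ∨ μ i = -1) (hνmv : ∀ i, ν i = 1 ∨ ν i = -1)
    (hμvalid : ValidSum μ) (hνvalid : ValidSum ν) :
    ∃ L : List (Fin (2 * n)),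
      L.length ≤ n ∧
      (∀ M : List (Fin (2 * n)), M <+: L → ValidSum (applyFlips M μ)) ∧
      applyFlips L μ = ν := by
  classical
  set D : Finset (Fin (2 * n)) := Finset.univ.filter (fun i => μ i ≠ ν i) with hD
  have hmemD : ∀ i, i ∈ D ↔ μ i ≠ ν i := by
    intro i; simp [hD]
  have hνD : ∀ i ∈ D, ν i = -μ i := by
    intro i hi
    have hne := (hmemD i).mp hi
    rcases hμmv i with h | h <;> rcases hνmv i with h' | h' <;> rw [h, h'] at hne ⊢ <;> omega
  -- |D| is even
  have hsub : ∑ i ∈ D, (μ i - ν i) = (∑ i, μ i) - (∑ i, ν i) := by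
    rw [← Finset.sum_sub_distrib]
    apply Finset.sum_subset (Finset.subset_univ D)
    intro i _ hiD
    have : μ i = ν i := by
      by_contra hc
      exact hiD ((hmemD i).mpr hc)
    rw [this]; ring
  have h2S : 2 * (∑ i ∈ D, μ i) = (∑ i, μ i) - (∑ i, ν i) := by
    rw [← hsub, Finset.mul_sum]
    apply Finset.sum_congr rfl
    intro i hi
    rw [hνD i hi]; ring
  have hSeven : Even (∑ i ∈ D, μ i) := by
    rw [Int.even_iff]
    rcases hμvalid with h | h <;> rcases hνvalid with h' | h' <;> rw [h, h'] at h2S <;> omega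
  have hplus : Even ((∑ i ∈ D, μ i) + (D.card : ℤ)) := by
    have : (∑ i ∈ D, μ i) + (D.card : ℤ) = ∑ i ∈ D, (μ i + 1) := by
      rw [Finset.sum_add_distrib, Finset.sum_const, nsmul_eq_mul, mul_one]
    rw [this]
    apply Finset.even_sum
    intro i hi
    rcases hμmv i with h | h <;> rw [h]
    · exact ⟨1, by ring⟩
    · exact ⟨0, by ring⟩
  have hDeven : Even D.card := by
    have : Even ((D.card : ℤ)) := by
      rcases hSeven with ⟨a, ha⟩
      rcases hplus with ⟨b, hb⟩
      exact ⟨b - a, by omega⟩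
    exact (Int.even_coe_nat _).mp this
  -- the cumulative parity set
  set c : Fin (2 * n) → ℕ := fun i => (D.filter (fun j => j.val ≤ i.val)).card with hc
  set F₀ : Finset (Fin (2 * n)) := Finset.univ.filter (fun i => Odd (c i)) with hF₀
  have hmemF₀ : ∀ i, i ∈ F₀ ↔ Odd (c i) := by
    intro i; simp [hF₀]
  have hN2 : 2 ≤ 2 * n := by omega
  -- toggle characterization
  have htog : ∀ i, Tog F₀ i ↔ i ∈ D := by
    intro i
    by_cases h0 : i.val = 0
    · -- i = 0 case
      have hpv : (prevC i).val = 2 * n - 1 := by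
        show (i.val + (2 * n - 1)) % (2 * n) = 2 * n - 1
        rw [h0, Nat.zero_add, Nat.mod_eq_of_lt (by omega)]
      have hcp : c (prevC i) = D.card := by
        show (D.filter (fun j => j.val ≤ (prevC i).val)).card = D.card
        congr 1
        apply Finset.filter_true_of_mem
        intro j _
        rw [hpv]
        have := j.isLt
        omega
      have hci : c i = if i ∈ D then 1 else 0 := by
        show (D.filter (fun j => j.val ≤ i.val)).card = if i ∈ D then 1 else 0
        have hfe : D.filter (fun j => j.val ≤ i.val) = D.filter (fun j => j = i) := by
          apply Finset.filter_congr
          intro j _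
          constructor
          · intro hj
            apply Fin.ext
            rw [h0] at hj ⊢
            omega
          · intro hj
            rw [hj]
        rw [hfe, Finset.filter_eq']
        split <;> simp_all
      have hnotodd : ¬ Odd (c (prevC i)) := by
        rw [hcp]
        exact fun h => (Nat.not_even_iff_odd.mpr h) hDeven
      unfold Tog
      rw [hmemF₀, hmemF₀, hci]
      by_cases hiD : i ∈ D
      · simp [hiD, hnotodd]
      · simp [hiD, hnotodd]

    · -- i.val ≥ 1 case
      have hpv : (prevC i).val = i.val - 1 := by
        show (i.val + (2 * n - 1)) % (2 * n) = i.val - 1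
        have hi := i.isLt
        have h : i.val + (2 * n - 1) = (i.val - 1) + 2 * n := by omega
        rw [h, Nat.add_mod_right, Nat.mod_eq_of_lt (by omega)]
      have hstep : c i = c (prevC i) + (if i ∈ D then 1 else 0) := by
        show (D.filter (fun j => j.val ≤ i.val)).card =
          (D.filter (fun j => j.val ≤ (prevC i).val)).card + (if i ∈ D then 1 else 0)
        by_cases hiD : i ∈ D
        · rw [if_pos hiD]
          have hfe : D.filter (fun j => j.val ≤ i.val) =
              insert i (D.filter (fun j => j.val ≤ (prevC i).val)) := by
            ext j
            simp only [Finset.mem_filter, Finset.mem_insert, hpv]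
            constructor
            · rintro ⟨hjD, hjle⟩
              by_cases hje : j.val = i.val
              · exact Or.inl (Fin.ext hje)
              · exact Or.inr ⟨hjD, by omega⟩
            · rintro (rfl | ⟨hjD, hjle⟩)
              · exact ⟨hiD, le_refl _⟩
              · exact ⟨hjD, by omega⟩
          rw [hfe, Finset.card_insert_of_notMem]
          simp only [Finset.mem_filter, hpv]
          rintro ⟨-, hle⟩
          omega
        · rw [if_neg hiD, Nat.add_zero]
          congr 1
          ext j
          simp only [Finset.mem_filter, hpv]
          constructor
          · rintro ⟨hjD, hjle⟩
            refine ⟨hjD, ?_⟩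
            by_cases hje : j.val = i.val
            · exact absurd (Fin.ext hje ▸ hjD) hiD
            · omega
          · rintro ⟨hjD, hjle⟩
            exact ⟨hjD, by omega⟩
      unfold Tog
      rw [hmemF₀, hmemF₀, hstep]
      by_cases hiD : i ∈ D
      · simp only [if_pos hiD, Nat.odd_add_one, hiD, iff_true]
        by_cases ho : Odd (c (prevC i)) <;> simp [ho, Nat.odd_add_one]
      · simp only [if_neg hiD, Nat.add_zero]
        simp [hiD]
  -- the flip set: F₀ or its complement, whichever is small
  have hflip₀ : flipSet F₀ μ = ν := by
    funext i
    unfold flipSet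
    by_cases hiD : i ∈ D
    · rw [if_pos ((htog i).mpr hiD), hνD i hiD]
    · rw [if_neg (fun hc => hiD ((htog i).mp hc))]
      by_contra hc
      exact hiD ((hmemD i).mpr (fun h => hc h))
  have hcardU : (Finset.univ : Finset (Fin (2 * n))).card = 2 * n := by simp
  obtain ⟨F, hFcard, hFflip⟩ :
      ∃ F : Finset (Fin (2 * n)), F.card ≤ n ∧ flipSet F μ = ν := by
    by_cases h : F₀.card ≤ n
    · exact ⟨F₀, h, hflip₀⟩
    · refine ⟨F₀ᶜ, ?_, by rw [flipSet_compl, hflip₀]⟩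
      rw [Finset.card_compl, Fintype.card_fin]
      omega
  have hv2 : ValidSum (flipSet F μ) := by rw [hFflip]; exact hνvalid
  obtain ⟨L, hlen, hpre, happ⟩ := reach F.card F rfl μ hμmv hμvalid hv2
  exact ⟨L, by omega, hpre, by rw [happ, hFflip]⟩
end

section
/- The diameter of OFG(A_{2n}) is exactly n: every pair of valid MV assignments is connected by a path of at most n face flips, and there exist valid MV assignments μ, ν whose distance in OFG(A_{2n}) is exactly n. -/
def prevCrease {n : ℕ} (i : Fin (2 * n)) : Fin (2 * n) :=
  ⟨(i.val + (2 * n - 1)) % (2 * n), Nat.mod_lt _ (Nat.lt_of_le_of_lt (Nat.zero_le _) i.isLt)⟩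

theorem next_prev {n : ℕ} (i : Fin (2 * n)) : nextCrease (prevCrease i) = i := by
  have h := i.isLt
  apply Fin.ext
  simp only [nextCrease, prevCrease]
  rcases Nat.eq_zero_or_pos i.val with h0 | h0
  · have h1 : (0 + (2 * n - 1)) % (2 * n) = 2 * n - 1 := by
      rw [Nat.zero_add]; exact Nat.mod_eq_of_lt (by omega)
    rw [h0, h1]
    have h2 : 2 * n - 1 + 1 = 2 * n := by omega
    rw [h2, Nat.mod_self]
  · have : (i.val + (2 * n - 1)) % (2 * n) = i.val - 1 := by
      have : i.val + (2 * n - 1) = (i.val - 1) + 2 * n := by omega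
      rw [this, Nat.add_mod_right, Nat.mod_eq_of_lt (by omega)]
    rw [this, Nat.mod_eq_of_lt (by omega)]
    omega

theorem prev_next {n : ℕ} (i : Fin (2 * n)) : prevCrease (nextCrease i) = i := by
  have h := i.isLt
  apply Fin.ext
  simp only [nextCrease, prevCrease]
  rcases Nat.lt_or_ge (i.val + 1) (2 * n) with h0 | h0
  · rw [Nat.mod_eq_of_lt h0]
    have : i.val + 1 + (2 * n - 1) = i.val + 2 * n := by omega
    rw [this, Nat.add_mod_right, Nat.mod_eq_of_lt (by omega)]
  · have hi : i.val = 2 * n - 1 := by omega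
    have : i.val + 1 = 2 * n := by omega
    rw [this, Nat.mod_self, Nat.zero_add, Nat.mod_eq_of_lt (by omega), hi]

theorem next_ne {n : ℕ} (k : Fin (2 * n)) (hn : 1 ≤ n) : nextCrease k ≠ k := by
  have h := k.isLt
  intro he
  have := congrArg Fin.val he
  simp only [nextCrease] at this
  rcases Nat.lt_or_ge (k.val + 1) (2 * n) with h0 | h0
  · rw [Nat.mod_eq_of_lt h0] at this; omega
  · have : (k.val + 1) % (2*n) = 0 := by
      have : k.val + 1 = 2 * n := by omega
      rw [this, Nat.mod_self]
    simp only [this] at *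
    omega

theorem prev_ne {n : ℕ} (k : Fin (2 * n)) (hn : 1 ≤ n) : prevCrease k ≠ k := by
  intro he
  have := next_ne k hn
  have h2 := congrArg nextCrease he
  rw [next_prev] at h2
  exact this h2.symm

theorem prev_inj {n : ℕ} {i j : Fin (2 * n)} (h : prevCrease i = prevCrease j) : i = j := by
  have := congrArg nextCrease h
  rwa [next_prev, next_prev] at this

theorem prev_succ {n : ℕ} (v : ℕ) (h : v + 1 < 2 * n) :
    prevCrease (⟨v + 1, h⟩ : Fin (2 * n)) = ⟨v, by omega⟩ := by
  apply Fin.ext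
  simp only [prevCrease]
  have : v + 1 + (2 * n - 1) = v + 2 * n := by omega
  rw [this, Nat.add_mod_right, Nat.mod_eq_of_lt (by omega)]

/-- Toggle `μ` on the boundary creases of the face set `x`. -/
def tog {n : ℕ} (x : Finset (Fin (2 * n))) (μ : Fin (2 * n) → ℤ) : Fin (2 * n) → ℤ :=
  fun i => if (prevCrease i ∈ x ↔ i ∈ x) then μ i else -μ i

theorem sum_toggle_pair {n : ℕ} (μ : Fin (2 * n) → ℤ) (a b : Fin (2 * n)) (hab : a ≠ b) :
    (∑ i, (if i = a ∨ i = b then -μ i else μ i)) = (∑ i, μ i) - 2 * μ a - 2 * μ b := by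
  have h : ∀ i, (if i = a ∨ i = b then -μ i else μ i)
      = μ i + (if i ∈ ({a, b} : Finset (Fin (2 * n))) then -2 * μ i else 0) := by
    intro i
    by_cases hi : i = a ∨ i = b
    · rw [if_pos hi, if_pos (by simpa using hi)]; ring
    · rw [if_neg hi, if_neg (by simpa using hi)]; ring
  rw [Finset.sum_congr rfl (fun i _ => h i), Finset.sum_add_distrib]
  rw [Finset.sum_ite_mem, Finset.univ_inter, Finset.sum_pair hab]
  ring

theorem sum_faceFlip {n : ℕ} (hn : 1 ≤ n) (k : Fin (2 * n)) (μ : Fin (2 * n) → ℤ) :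
    (∑ i, faceFlip k μ i) = (∑ i, μ i) - 2 * μ k - 2 * μ (nextCrease k) := by
  simpa [faceFlip] using sum_toggle_pair μ k (nextCrease k) (next_ne k hn).symm

theorem const_of_cond {n : ℕ} (x : Finset (Fin (2 * n)))
    (hc : ∀ i, (prevCrease i ∈ x ↔ i ∈ x)) : x = ∅ ∨ x = Finset.univ := by
  by_cases hN : 0 < 2 * n
  · have key : ∀ v (h : v < 2 * n),
        ((⟨v, h⟩ : Fin (2 * n)) ∈ x ↔ (⟨0, hN⟩ : Fin (2 * n)) ∈ x) := by
      intro v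
      induction v with
      | zero => intro h; rfl
      | succ w ih =>
        intro h
        have h2 := hc ⟨w + 1, h⟩
        rw [prev_succ w h] at h2
        exact h2.symm.trans (ih (by omega))
    by_cases h0 : (⟨0, hN⟩ : Fin (2 * n)) ∈ x
    · right
      rw [Finset.eq_univ_iff_forall]
      intro j
      have := (key j.val j.isLt).mpr h0
      simpa using this
    · left
      rw [Finset.eq_empty_iff_forall_notMem]
      intro j hj
      exact h0 ((key j.val j.isLt).mp (by simpa using hj))
  · left
    rw [Finset.eq_empty_iff_forall_notMem]
    intro j _
    exact absurd j.isLt (by omega)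

theorem tog_erase {n : ℕ} (hn : 1 ≤ n) (x : Finset (Fin (2 * n))) (k : Fin (2 * n))
    (hk : k ∈ x) (μ : Fin (2 * n) → ℤ) :
    tog (x.erase k) (faceFlip k μ) = tog x μ := by
  funext i
  simp only [tog, faceFlip]
  by_cases h1 : i = k
  · subst h1
    simp only [Finset.mem_erase, ne_eq, not_true_eq_false, false_and, iff_false, hk, iff_true,
      (prev_ne i hn), not_false_eq_true, and_true, true_or, if_pos]
    by_cases hp : prevCrease i ∈ x <;> simp [hp]
  · by_cases h2 : i = nextCrease k
    · subst h2
      have hpk : prevCrease (nextCrease k) = k := prev_next k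
      have hne : nextCrease k ≠ k := next_ne k hn
      simp only [hpk, Finset.mem_erase, ne_eq, not_true_eq_false, false_and, iff_false, hne,
        not_false_eq_true, true_and, hk, true_iff, or_true, if_pos]
      by_cases hq : nextCrease k ∈ x <;> simp [hq, hne]
    · have hpn : prevCrease i ≠ k := by
        intro he
        exact h2 (by rw [← he, next_prev])
      simp only [Finset.mem_erase, ne_eq, h1, not_false_eq_true, true_and, hpn, h2, or_self,
        if_false]

theorem neg_faceFlip {n : ℕ} (k : Fin (2 * n)) (μ : Fin (2 * n) → ℤ) :
    faceFlip k (fun i => -μ i) = fun i => -(faceFlip k μ i) := by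
  funext i
  simp only [faceFlip]
  by_cases h : i = k ∨ i = nextCrease k <;> simp [h]

theorem neg_tog {n : ℕ} (x : Finset (Fin (2 * n))) (μ : Fin (2 * n) → ℤ) :
    tog x (fun i => -μ i) = fun i => -(tog x μ i) := by
  funext i
  simp only [tog]
  by_cases h : prevCrease i ∈ x ↔ i ∈ x <;> simp [h]

theorem ValidSum_neg {n : ℕ} (μ : Fin (2 * n) → ℤ) (h : ValidSum μ) :
    ValidSum (fun i => -μ i) := by
  rcases h with h | h <;> simp [ValidSum, Finset.sum_neg_distrib, h]

theorem exists_good_pos {n : ℕ} (hn : 1 ≤ n) (x : Finset (Fin (2 * n)))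
    (hne : x.Nonempty) (hxu : x ≠ Finset.univ) (μ : Fin (2 * n) → ℤ)
    (hμ : ∀ i, μ i = 1 ∨ μ i = -1) (h2 : (∑ i, μ i) = 2)
    (hv2 : ValidSum (tog x μ)) : ∃ k ∈ x, ValidSum (faceFlip k μ) := by
  by_contra hcon
  push_neg at hcon
  -- every face in x is stuck: both creases are -1
  have hstuck : ∀ k ∈ x, μ k = -1 ∧ μ (nextCrease k) = -1 := by
    intro k hk
    have hbad := hcon k hk
    have hs := sum_faceFlip hn k μ
    rw [h2] at hs
    rcases hμ k with ha | ha <;> rcases hμ (nextCrease k) with hb | hb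
    · exact absurd (Or.inr (by rw [hs, ha, hb]; ring)) hbad
    · exact absurd (Or.inl (by rw [hs, ha, hb]; ring)) hbad
    · exact absurd (Or.inl (by rw [hs, ha, hb]; ring)) hbad
    · exact ⟨ha, hb⟩
  have hm : ∀ i, ¬(prevCrease i ∈ x ↔ i ∈ x) → μ i = -1 := by
    intro i hi
    by_cases h1 : i ∈ x
    · exact (hstuck i h1).1
    · have h3 : prevCrease i ∈ x := by tauto
      have := (hstuck _ h3).2
      rwa [next_prev] at this
  have hterm : ∀ i, tog x μ i - μ i = if (prevCrease i ∈ x ↔ i ∈ x) then 0 else 2 := by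
    intro i
    by_cases hc : prevCrease i ∈ x ↔ i ∈ x
    · simp [tog, hc]
    · have := hm i hc
      simp [tog, hc, this]
  have hdiff : (∑ i, tog x μ i) - (∑ i, μ i)
      = ∑ i, (if (prevCrease i ∈ x ↔ i ∈ x) then (0 : ℤ) else 2) := by
    rw [← Finset.sum_sub_distrib]
    exact Finset.sum_congr rfl (fun i _ => hterm i)
  have hnonneg : (0 : ℤ) ≤ ∑ i, (if (prevCrease i ∈ x ↔ i ∈ x) then (0 : ℤ) else 2) := by
    apply Finset.sum_nonneg
    intro i _
    by_cases hc : prevCrease i ∈ x ↔ i ∈ x <;> simp [hc]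
  have hzero : (∑ i, (if (prevCrease i ∈ x ↔ i ∈ x) then (0 : ℤ) else 2)) = 0 := by
    rcases hv2 with h | h <;> rw [← hdiff, h, h2] <;> omega
  have hall : ∀ i, (prevCrease i ∈ x ↔ i ∈ x) := by
    intro i
    by_contra hc
    have hmem := Finset.sum_eq_zero_iff_of_nonneg
      (fun i _ => by by_cases hc : prevCrease i ∈ x ↔ i ∈ x <;> simp [hc]) |>.mp hzero
    have := hmem i (Finset.mem_univ i)
    rw [if_neg hc] at this
    omega
  rcases const_of_cond x hall with h | h
  · exact hne.ne_empty h
  · exact hxu h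

theorem exists_good {n : ℕ} (hn : 1 ≤ n) (x : Finset (Fin (2 * n)))
    (hne : x.Nonempty) (hxu : x ≠ Finset.univ) (μ : Fin (2 * n) → ℤ)
    (hμ : ∀ i, μ i = 1 ∨ μ i = -1) (hv : ValidSum μ)
    (hv2 : ValidSum (tog x μ)) : ∃ k ∈ x, ValidSum (faceFlip k μ) := by
  rcases hv with h2 | h2
  · exact exists_good_pos hn x hne hxu μ hμ h2 hv2
  · have h2' : (∑ i, (fun i => -μ i) i) = 2 := by
      simp only [Finset.sum_neg_distrib, h2]; ring
    have hv2' : ValidSum (tog x (fun i => -μ i)) := by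
      rw [neg_tog]
      exact ValidSum_neg _ hv2
    obtain ⟨k, hk, hvf⟩ := exists_good_pos hn x hne hxu (fun i => -μ i)
      (fun i => by rcases hμ i with h | h <;> simp [h]) h2' hv2'
    refine ⟨k, hk, ?_⟩
    rw [neg_faceFlip] at hvf
    rcases hvf with h | h <;> simp only [Finset.sum_neg_distrib] at h
    · right; omega
    · left; omega

theorem key_lemma {n : ℕ} (hn : 1 ≤ n) :
    ∀ m (x : Finset (Fin (2 * n))), x.card = m → x ≠ Finset.univ →
    ∀ μ : Fin (2 * n) → ℤ, (∀ i, μ i = 1 ∨ μ i = -1) → ValidSum μ → ValidSum (tog x μ) →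
    ∃ L : List (Fin (2 * n)), L.length = m ∧
      (∀ M, M <+: L → ValidSum (applyFlips M μ)) ∧ applyFlips L μ = tog x μ := by
  intro m
  induction m with
  | zero =>
    intro x hc _ μ hμ hv _
    have hx : x = ∅ := Finset.card_eq_zero.mp hc
    subst hx
    refine ⟨[], rfl, ?_, ?_⟩
    · intro M hM
      rw [List.prefix_nil.mp hM]
      exact hv
    · funext i
      simp [applyFlips, tog]
  | succ m ih =>
    intro x hc hxu μ hμ hv hv2
    have hne : x.Nonempty := Finset.card_pos.mp (by omega)
    obtain ⟨k, hk, hvf⟩ := exists_good hn x hne hxu μ hμ hv hv2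
    have hμ' : ∀ i, faceFlip k μ i = 1 ∨ faceFlip k μ i = -1 := by
      intro i
      simp only [faceFlip]
      by_cases h : i = k ∨ i = nextCrease k <;> rcases hμ i with h1 | h1 <;> simp [h, h1]
    have hcard : (x.erase k).card = m := by
      rw [Finset.card_erase_of_mem hk, hc]; omega
    have hxu' : x.erase k ≠ Finset.univ := by
      intro h
      have h1 : (x.erase k).card = 2 * n := by rw [h, Finset.card_univ, Fintype.card_fin]
      have h2 : x.card ≤ 2 * n := by
        have := Finset.card_le_card (Finset.subset_univ x)
        simpa using this
      omega
    have htog : tog (x.erase k) (faceFlip k μ) = tog x μ := tog_erase hn x k hk μ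
    obtain ⟨L', hlen, hpre, happ⟩ := ih (x.erase k) hcard hxu' (faceFlip k μ) hμ' hvf
      (by rw [htog]; exact hv2)
    refine ⟨k :: L', by simp [hlen], ?_, ?_⟩
    · intro M hM
      cases M with
      | nil => exact hv
      | cons a M' =>
        rw [List.cons_prefix_cons] at hM
        obtain ⟨rfl, hM'⟩ := hM
        exact hpre M' hM'
    · show applyFlips L' (faceFlip k μ) = tog x μ
      rw [happ, htog]

theorem prev_zero {n : ℕ} (h : 0 < 2 * n) :
    prevCrease (⟨0, h⟩ : Fin (2 * n)) = ⟨2 * n - 1, by omega⟩ := by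
  apply Fin.ext
  simp only [prevCrease, Nat.zero_add]
  exact Nat.mod_eq_of_lt (by omega)

def pref {n : ℕ} (μ ν : Fin (2 * n) → ℤ) (j : ℕ) : ℕ :=
  (Finset.univ.filter (fun i : Fin (2 * n) => 0 < i.val ∧ i.val ≤ j ∧ μ i ≠ ν i)).card

def Xset {n : ℕ} (μ ν : Fin (2 * n) → ℤ) : Finset (Fin (2 * n)) :=
  Finset.univ.filter (fun j => ¬ Even (pref μ ν j.val))

theorem pref_zero {n : ℕ} (μ ν : Fin (2 * n) → ℤ) : pref μ ν 0 = 0 := by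
  apply Finset.card_eq_zero.mpr
  ext i
  simp only [Finset.mem_filter, Finset.mem_univ, true_and, Finset.notMem_empty, iff_false]
  omega

theorem pref_succ {n : ℕ} (μ ν : Fin (2 * n) → ℤ) (v : ℕ) (h : v + 1 < 2 * n) :
    pref μ ν (v + 1) = pref μ ν v
      + (if μ ⟨v + 1, h⟩ ≠ ν ⟨v + 1, h⟩ then 1 else 0) := by
  by_cases hd : μ ⟨v + 1, h⟩ ≠ ν ⟨v + 1, h⟩
  · rw [if_pos hd]
    have hset : (Finset.univ.filter
        (fun i : Fin (2 * n) => 0 < i.val ∧ i.val ≤ v + 1 ∧ μ i ≠ ν i))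
        = insert ⟨v + 1, h⟩ (Finset.univ.filter
        (fun i : Fin (2 * n) => 0 < i.val ∧ i.val ≤ v ∧ μ i ≠ ν i)) := by
      ext i
      simp only [Finset.mem_filter, Finset.mem_univ, true_and, Finset.mem_insert]
      constructor
      · rintro ⟨h1, h2, h3⟩
        by_cases hv : i.val = v + 1
        · left; exact Fin.ext hv
        · right; exact ⟨h1, by omega, h3⟩
      · rintro (rfl | ⟨h1, h2, h3⟩)
        · exact ⟨Nat.succ_pos v, le_refl _, hd⟩
        · exact ⟨h1, by omega, h3⟩
    rw [pref, hset, Finset.card_insert_of_notMem (by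
      simp only [Finset.mem_filter, Finset.mem_univ, true_and]
      rintro ⟨-, h2, -⟩
      have h2' : v + 1 ≤ v := h2
      omega)]
    rfl
  · rw [if_neg hd]
    have hset : (Finset.univ.filter
        (fun i : Fin (2 * n) => 0 < i.val ∧ i.val ≤ v + 1 ∧ μ i ≠ ν i))
        = (Finset.univ.filter
        (fun i : Fin (2 * n) => 0 < i.val ∧ i.val ≤ v ∧ μ i ≠ ν i)) := by
      ext i
      simp only [Finset.mem_filter, Finset.mem_univ, true_and]
      constructor
      · rintro ⟨h1, h2, h3⟩
        refine ⟨h1, ?_, h3⟩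
        rcases Nat.lt_or_ge i.val (v + 1) with hv | hv
        · omega
        · exfalso
          have : i = ⟨v + 1, h⟩ := Fin.ext (show i.val = v + 1 by omega)
          rw [this] at h3
          exact hd h3
      · rintro ⟨h1, h2, h3⟩
        exact ⟨h1, by omega, h3⟩
    rw [pref, hset, Nat.add_zero]
    rfl

theorem cardD_eq {n : ℕ} (h0 : 0 < 2 * n) (μ ν : Fin (2 * n) → ℤ) :
    (Finset.univ.filter (fun i : Fin (2 * n) => μ i ≠ ν i)).card
      = pref μ ν (2 * n - 1)
        + (if μ ⟨0, h0⟩ ≠ ν ⟨0, h0⟩ then 1 else 0) := by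
  by_cases hd : μ ⟨0, h0⟩ ≠ ν (⟨0, h0⟩ : Fin (2 * n))
  · rw [if_pos hd]
    have hset : (Finset.univ.filter (fun i : Fin (2 * n) => μ i ≠ ν i))
        = insert ⟨0, h0⟩ (Finset.univ.filter
          (fun i : Fin (2 * n) => 0 < i.val ∧ i.val ≤ 2 * n - 1 ∧ μ i ≠ ν i)) := by
      ext i
      simp only [Finset.mem_filter, Finset.mem_univ, true_and, Finset.mem_insert]
      constructor
      · intro h3
        by_cases hv : i.val = 0
        · left; exact Fin.ext hv
        · right; exact ⟨by omega, by have := i.isLt; omega, h3⟩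
      · rintro (rfl | ⟨h1, h2, h3⟩)
        · exact hd
        · exact h3
    rw [hset, Finset.card_insert_of_notMem (by
      simp only [Finset.mem_filter, Finset.mem_univ, true_and]
      rintro ⟨h1, -, -⟩
      have h1' : 0 < 0 := h1
      omega)]
    rfl
  · rw [if_neg hd]
    have hset : (Finset.univ.filter (fun i : Fin (2 * n) => μ i ≠ ν i))
        = (Finset.univ.filter
          (fun i : Fin (2 * n) => 0 < i.val ∧ i.val ≤ 2 * n - 1 ∧ μ i ≠ ν i)) := by
      ext i
      simp only [Finset.mem_filter, Finset.mem_univ, true_and]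
      constructor
      · intro h3
        refine ⟨?_, by have := i.isLt; omega, h3⟩
        by_cases hv : i.val = 0
        · exfalso
          have : i = (⟨0, h0⟩ : Fin (2 * n)) := Fin.ext hv
          rw [this] at h3
          exact hd h3
        · omega
      · rintro ⟨h1, h2, h3⟩
        exact h3
    rw [hset, Nat.add_zero]
    rfl

theorem even_cardD {n : ℕ} (μ ν : Fin (2 * n) → ℤ)
    (hμ : ∀ i, μ i = 1 ∨ μ i = -1) (hν : ∀ i, ν i = 1 ∨ ν i = -1)
    (hvμ : ValidSum μ) (hvν : ValidSum ν) :
    Even (Finset.univ.filter (fun i : Fin (2 * n) => μ i ≠ ν i)).card := by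
  set D := Finset.univ.filter (fun i : Fin (2 * n) => μ i ≠ ν i) with hD
  have hsub : ∑ i ∈ D, (μ i - ν i) = (∑ i, μ i) - (∑ i, ν i) := by
    rw [← Finset.sum_sub_distrib]
    apply Finset.sum_subset (Finset.subset_univ D)
    intro i _ hi
    simp only [hD, Finset.mem_filter, Finset.mem_univ, true_and, not_not] at hi
    omega
  have hterm : ∀ i ∈ D, μ i - ν i = 2 * μ i := by
    intro i hi
    simp only [hD, Finset.mem_filter, Finset.mem_univ, true_and] at hi
    rcases hμ i with h1 | h1 <;> rcases hν i with h2 | h2 <;> omega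
  have h2S : 2 * (∑ i ∈ D, μ i) = (∑ i, μ i) - (∑ i, ν i) := by
    rw [← hsub, Finset.mul_sum]
    exact Finset.sum_congr rfl (fun i hi => (hterm i hi).symm)
  have hS : (∑ i ∈ D, μ i) = 0 ∨ (∑ i ∈ D, μ i) = 2 ∨ (∑ i ∈ D, μ i) = -2 := by
    rcases hvμ with h1 | h1 <;> rcases hvν with h2 | h2 <;> rw [h1, h2] at h2S <;> omega
  have hdvd : (2 : ℤ) ∣ ((D.card : ℤ) - ∑ i ∈ D, μ i) := by
    have : (D.card : ℤ) - ∑ i ∈ D, μ i = ∑ i ∈ D, (1 - μ i) := by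
      rw [Finset.sum_sub_distrib, Finset.sum_const, nsmul_eq_mul, mul_one]
    rw [this]
    apply Finset.dvd_sum
    intro i hi
    rcases hμ i with h1 | h1 <;> rw [h1] <;> [exact ⟨0, by ring⟩; exact ⟨1, by ring⟩]
  obtain ⟨c2, hc2⟩ := hdvd
  have hev : Even ((D.card : ℤ)) := by
    rcases hS with h | h | h
    · exact ⟨c2, by omega⟩
    · exact ⟨c2 + 1, by omega⟩
    · exact ⟨c2 - 1, by omega⟩
  exact Int.even_coe_nat D.card |>.mp hev

theorem crease_cond {n : ℕ} (hn : 1 ≤ n) (μ ν : Fin (2 * n) → ℤ)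
    (hμ : ∀ i, μ i = 1 ∨ μ i = -1) (hν : ∀ i, ν i = 1 ∨ ν i = -1)
    (hvμ : ValidSum μ) (hvν : ValidSum ν) :
    ∀ i, ((prevCrease i ∈ Xset μ ν ↔ i ∈ Xset μ ν) ↔ μ i = ν i) := by
  have hEv := even_cardD μ ν hμ hν hvμ hvν
  rintro ⟨v, hv⟩
  cases v with
  | zero =>
    have hcd := cardD_eq hv μ ν
    rw [prev_zero hv]
    have h0 : (⟨0, hv⟩ : Fin (2 * n)) ∉ Xset μ ν := by
      simp [Xset, pref_zero]
    have hmem : (⟨2 * n - 1, by omega⟩ : Fin (2 * n)) ∈ Xset μ ν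
        ↔ ¬ Even (pref μ ν (2 * n - 1)) := by
      simp [Xset]
    constructor
    · intro h
      by_cases hd : μ ⟨0, hv⟩ = ν ⟨0, hv⟩
      · exact hd
      · exfalso
        rw [if_pos hd] at hcd
        rw [hcd, Nat.even_add_one] at hEv
        have : (⟨2 * n - 1, by omega⟩ : Fin (2 * n)) ∉ Xset μ ν := fun hx => h0 (h.mp hx)
        rw [hmem, not_not] at this
        exact hEv this
    · intro hd
      rw [if_neg (by simpa using hd), Nat.add_zero] at hcd
      rw [← hcd] at hmem
      constructor
      · intro hx
        exact absurd (hmem.mp hx) (by simpa using hEv)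
      · intro hx
        exact absurd hx h0
  | succ w =>
    rw [prev_succ w hv]
    have hm1 : (⟨w + 1, hv⟩ : Fin (2 * n)) ∈ Xset μ ν ↔ ¬ Even (pref μ ν (w + 1)) := by
      simp [Xset]
    have hm2 : (⟨w, by omega⟩ : Fin (2 * n)) ∈ Xset μ ν ↔ ¬ Even (pref μ ν w) := by
      simp [Xset]
    rw [hm1, hm2, pref_succ μ ν w hv]
    by_cases hd : μ ⟨w + 1, hv⟩ = ν ⟨w + 1, hv⟩
    · rw [if_neg (by simpa using hd), Nat.add_zero]
      simp [hd]
    · rw [if_pos (by simpa using hd), Nat.even_add_one]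
      simp only [hd, iff_false]
      tauto

theorem part1 {n : ℕ} (hn : 1 ≤ n) (μ ν : Fin (2 * n) → ℤ)
    (hμ : ∀ i, μ i = 1 ∨ μ i = -1) (hν : ∀ i, ν i = 1 ∨ ν i = -1)
    (hvμ : ValidSum μ) (hvν : ValidSum ν) :
    ∃ L : List (Fin (2 * n)),
      L.length ≤ n ∧
      (∀ M : List (Fin (2 * n)), M <+: L → ValidSum (applyFlips M μ)) ∧
      applyFlips L μ = ν := by
  have hcond := crease_cond hn μ ν hμ hν hvμ hvν
  set X := Xset μ ν with hX
  set x := if X.card ≤ n then X else Xᶜ with hx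
  have hcompl : Xᶜ.card = 2 * n - X.card := by
    rw [Finset.card_compl, Fintype.card_fin]
  have hXle : X.card ≤ 2 * n := by
    have := Finset.card_le_card (Finset.subset_univ X)
    simpa using this
  have hcard : x.card ≤ n := by
    rw [hx]
    by_cases h : X.card ≤ n
    · rwa [if_pos h]
    · rw [if_neg h, hcompl]; omega
  have hcond' : ∀ i, ((prevCrease i ∈ x ↔ i ∈ x) ↔ μ i = ν i) := by
    intro i
    rw [hx]
    by_cases h : X.card ≤ n
    · rw [if_pos h]; exact hcond i
    · rw [if_neg h]
      rw [← hcond i]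
      simp only [Finset.mem_compl]
      tauto
  have htog : tog x μ = ν := by
    funext i
    by_cases hc : prevCrease i ∈ x ↔ i ∈ x
    · rw [tog, if_pos hc]
      exact (hcond' i).mp hc
    · rw [tog, if_neg hc]
      have hd : μ i ≠ ν i := fun h => hc ((hcond' i).mpr h)
      rcases hμ i with h1 | h1 <;> rcases hν i with h2 | h2 <;> omega
  have hxu : x ≠ Finset.univ := by
    intro h
    have : x.card = 2 * n := by rw [h, Finset.card_univ, Fintype.card_fin]
    omega
  obtain ⟨L, hlen, hpre, happ⟩ := key_lemma hn x.card x rfl hxu μ hμ hvμ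
    (by rw [htog]; exact hvν)
  exact ⟨L, by omega, hpre, by rw [happ, htog]⟩

/-- the witness assignment: minus exactly on creases `n, …, 2n-2`. -/
def muW (n : ℕ) : Fin (2 * n) → ℤ :=
  fun i => if n ≤ i.val ∧ i.val ≤ 2 * n - 2 then -1 else 1

/-- the far assignment: toggle `muW` at creases `0` and `n`. -/
def nuW (n : ℕ) : Fin (2 * n) → ℤ :=
  fun i => if i.val = 0 ∨ i.val = n then -(muW n i) else muW n i

theorem muW_pm (n : ℕ) : ∀ i, muW n i = 1 ∨ muW n i = -1 := by
  intro i
  unfold muW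
  by_cases h : n ≤ i.val ∧ i.val ≤ 2 * n - 2 <;> simp [h]

theorem nuW_pm (n : ℕ) : ∀ i, nuW n i = 1 ∨ nuW n i = -1 := by
  intro i
  unfold nuW
  rcases muW_pm n i with h | h <;>
    by_cases h2 : i.val = 0 ∨ i.val = n <;> simp [h, h2]

theorem sum_muW (n : ℕ) (hn : 1 ≤ n) : (∑ i, muW n i) = 2 := by
  unfold muW
  rw [Fin.sum_univ_eq_sum_range (fun v => if n ≤ v ∧ v ≤ 2 * n - 2 then (-1 : ℤ) else 1)]
  rw [Finset.range_eq_Ico,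
    ← Finset.sum_Ico_consecutive _ (Nat.zero_le n) (by omega : n ≤ 2 * n),
    ← Finset.sum_Ico_consecutive _ (by omega : n ≤ 2 * n - 1) (by omega : 2 * n - 1 ≤ 2 * n)]
  have e1 : (∑ v ∈ Finset.Ico 0 n, (if n ≤ v ∧ v ≤ 2 * n - 2 then (-1 : ℤ) else 1)) = n :=
    calc (∑ v ∈ Finset.Ico 0 n, (if n ≤ v ∧ v ≤ 2 * n - 2 then (-1 : ℤ) else 1))
        = ∑ _v ∈ Finset.Ico 0 n, (1 : ℤ) := Finset.sum_congr rfl (fun v hv => by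
          rw [Finset.mem_Ico] at hv
          exact if_neg (by omega))
      _ = n := by simp
  have e2 : (∑ v ∈ Finset.Ico n (2 * n - 1), (if n ≤ v ∧ v ≤ 2 * n - 2 then (-1 : ℤ) else 1))
      = -((n : ℤ) - 1) := by
    calc (∑ v ∈ Finset.Ico n (2 * n - 1), (if n ≤ v ∧ v ≤ 2 * n - 2 then (-1 : ℤ) else 1))
        = ∑ _v ∈ Finset.Ico n (2 * n - 1), (-1 : ℤ) := Finset.sum_congr rfl (fun v hv => by
          rw [Finset.mem_Ico] at hv
          exact if_pos (by omega))
      _ = -((n : ℤ) - 1) := by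
          rw [Finset.sum_const, Nat.card_Ico, nsmul_eq_mul]
          have : (((2 * n - 1 - n) : ℕ) : ℤ) = (n : ℤ) - 1 := by omega
          rw [this]; ring
  have e3 : (∑ v ∈ Finset.Ico (2 * n - 1) (2 * n),
      (if n ≤ v ∧ v ≤ 2 * n - 2 then (-1 : ℤ) else 1)) = 1 := by
    have : Finset.Ico (2 * n - 1) (2 * n) = {2 * n - 1} := by
      ext v; simp [Finset.mem_Ico]; omega
    rw [this, Finset.sum_singleton, if_neg (by omega)]
  rw [e1, e2, e3]
  ring

theorem sum_nuW (n : ℕ) (hn : 1 ≤ n) : ValidSum (nuW n) := by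
  have h0 : (0 : ℕ) < 2 * n := by omega
  have hnlt : n < 2 * n := by omega
  have hne : (⟨0, h0⟩ : Fin (2 * n)) ≠ ⟨n, hnlt⟩ := by
    intro h
    have := congrArg Fin.val h
    simp at this
    omega
  have heq : (∑ i, nuW n i)
      = ∑ i, (if i = (⟨0, h0⟩ : Fin (2 * n)) ∨ i = ⟨n, hnlt⟩ then -(muW n i) else muW n i) := by
    apply Finset.sum_congr rfl
    intro i _
    unfold nuW
    have : (i.val = 0 ∨ i.val = n) ↔ (i = (⟨0, h0⟩ : Fin (2 * n)) ∨ i = ⟨n, hnlt⟩) := by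
      rw [Fin.ext_iff, Fin.ext_iff]
    by_cases h : i.val = 0 ∨ i.val = n
    · rw [if_pos h, if_pos (this.mp h)]
    · rw [if_neg h, if_neg (fun hc => h (this.mpr hc))]
  unfold ValidSum
  rw [heq, sum_toggle_pair (muW n) _ _ hne, sum_muW n hn]
  have hμ0 : muW n ⟨0, h0⟩ = 1 := by
    unfold muW
    exact if_neg (show ¬(n ≤ 0 ∧ 0 ≤ 2 * n - 2) by omega)
  by_cases h2 : 2 ≤ n
  · have hμn : muW n ⟨n, hnlt⟩ = -1 := by
      unfold muW
      exact if_pos (show n ≤ n ∧ n ≤ 2 * n - 2 by omega)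
    left
    rw [hμ0, hμn]; ring
  · have hμn : muW n ⟨n, hnlt⟩ = 1 := by
      unfold muW
      rw [if_neg (by simp; omega)]
    right
    rw [hμ0, hμn]; ring

theorem applyFlips_eq {n : ℕ} (L : List (Fin (2 * n))) (μ : Fin (2 * n) → ℤ) (i : Fin (2 * n)) :
    applyFlips L μ i
      = if Even (L.countP (fun k => decide (i = k ∨ i = nextCrease k))) then μ i else -μ i := by
  induction L generalizing μ with
  | nil => simp [applyFlips]
  | cons a L ih =>
    have hstep : applyFlips (a :: L) μ = applyFlips L (faceFlip a μ) := rfl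
    rw [hstep, ih]
    by_cases h : i = a ∨ i = nextCrease a
    · rw [List.countP_cons_of_pos (by simpa using h)]
      set c := L.countP (fun k => decide (i = k ∨ i = nextCrease k)) with hc
      have hf : faceFlip a μ i = -μ i := by simp [faceFlip, h]
      rw [hf]
      by_cases he : Even c
      · rw [if_pos he, if_neg (by rw [Nat.even_add_one, not_not]; exact he)]
      · rw [if_neg he, if_pos (by rw [Nat.even_add_one]; exact he), neg_neg]
    · rw [List.countP_cons_of_neg (by simpa using h)]
      have hf : faceFlip a μ i = μ i := by simp [faceFlip, h]
      rw [hf]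

theorem countP_disj {α : Type*} (l : List α) (p q : α → Bool)
    (h : ∀ a, ¬(p a = true ∧ q a = true)) :
    l.countP (fun a => p a || q a) = l.countP p + l.countP q := by
  induction l with
  | nil => simp
  | cons a t ih =>
    rw [List.countP_cons, List.countP_cons, List.countP_cons, ih]
    have := h a
    by_cases hp : p a = true <;> by_cases hq : q a = true <;> simp [hp, hq] at * <;> omega

theorem count_split {n : ℕ} (hn : 1 ≤ n) (L : List (Fin (2 * n))) (i : Fin (2 * n)) :
    L.countP (fun k => decide (i = k ∨ i = nextCrease k))
      = L.countP (fun k => decide (k.val = i.val))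
        + L.countP (fun k => decide (k.val = (prevCrease i).val)) := by
  have h1 : L.countP (fun k => decide (i = k ∨ i = nextCrease k))
      = L.countP (fun k => decide (k.val = i.val) || decide (k.val = (prevCrease i).val)) := by
    apply List.countP_congr
    intro k _
    simp only [decide_eq_true_eq, Bool.or_eq_true]
    constructor
    · rintro (rfl | rfl)
      · simp
      · right
        rw [prev_next]
    · rintro (hk | hk)
      · left; exact (Fin.ext hk).symm
      · right
        have : k = prevCrease i := Fin.ext hk
        rw [this, next_prev]
  rw [h1]
  apply countP_disj
  intro k
  simp only [decide_eq_true_eq]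
  rintro ⟨h1', h2'⟩
  exact prev_ne i hn (Fin.ext (by omega))

theorem length_eq_sum {n : ℕ} (L : List (Fin (2 * n))) :
    L.length = ∑ v ∈ Finset.range (2 * n), L.countP (fun k => decide (k.val = v)) := by
  induction L with
  | nil => simp
  | cons a t ih =>
    simp only [List.countP_cons, List.length_cons, Finset.sum_add_distrib, ← ih]
    have : (∑ v ∈ Finset.range (2 * n), if (decide (a.val = v)) then 1 else 0) = 1 := by
      rw [Finset.sum_congr rfl (fun v _ => by
        show (if (decide (a.val = v)) then 1 else 0) = if a.val = v then 1 else 0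
        simp)]
      rw [Finset.sum_ite_eq (Finset.range (2 * n)) a.val (fun _ => 1),
        if_pos (Finset.mem_range.mpr a.isLt)]
    omega

theorem part2core {n : ℕ} (hn : 1 ≤ n) (L : List (Fin (2 * n)))
    (hL : applyFlips L (muW n) = nuW n) : n ≤ L.length := by
  set M : ℕ → ℕ := fun v => L.countP (fun k => decide (k.val = v)) with hM
  -- toggle parity at each crease
  have htog : ∀ i : Fin (2 * n),
      (Even (M i.val + M (prevCrease i).val) ↔ ¬(i.val = 0 ∨ i.val = n)) := by
    intro i
    have h1 := congrFun hL i
    rw [applyFlips_eq, count_split hn] at h1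
    have h2 : nuW n i = if i.val = 0 ∨ i.val = n then -(muW n i) else muW n i := rfl
    rw [h2] at h1
    rcases muW_pm n i with hm | hm <;>
      by_cases he : Even (M i.val + M (prevCrease i).val) <;>
      by_cases hc : i.val = 0 ∨ i.val = n <;>
      rw [hM] at he <;>
      simp only [he, hc, if_pos, if_neg, hm] at h1 ⊢ <;> tauto
  have hstep : ∀ v, v + 1 < 2 * n → v + 1 ≠ n →
      (Even (M (v + 1)) ↔ Even (M v)) := by
    intro v hv hne
    have := htog ⟨v + 1, hv⟩
    rw [prev_succ v hv] at this
    have h2 : Even (M (v + 1) + M v) := by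
      apply this.mpr
      simp only [not_or]
      exact ⟨by simp, by simpa using hne⟩
    rw [Nat.even_add] at h2
    exact h2
  have hclaim1 : ∀ v, v ≤ n - 1 → (Even (M v) ↔ Even (M 0)) := by
    intro v
    induction v with
    | zero => intro _; rfl
    | succ w ih =>
      intro hw
      rw [hstep w (by omega) (by omega)]
      exact ih (by omega)
  have hclaim2 : ∀ v, n ≤ v → v < 2 * n → (Even (M v) ↔ Even (M n)) := by
    intro v
    induction v with
    | zero => intro h1 _; exact absurd h1 (by omega)
    | succ w ih =>
      intro h1 h2
      rcases Nat.lt_or_ge w n with hw | hw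
      · have : w + 1 = n := by omega
        rw [this]
      · rw [hstep w (by omega) (by omega)]
        exact ih hw (by omega)
  have hdiff : ¬ Even (M n + M (n - 1)) := by
    have hv : n < 2 * n := by omega
    have := htog ⟨n, hv⟩
    have hprev : (prevCrease (⟨n, hv⟩ : Fin (2 * n))).val = n - 1 := by
      have h1 : (⟨n, hv⟩ : Fin (2 * n)) = ⟨(n - 1) + 1, by omega⟩ := Fin.ext (show n = n - 1 + 1 by omega)
      rw [h1, prev_succ (n - 1) (by omega)]
    rw [hprev] at this
    intro he
    have := this.mp he
    simp at this
  -- one of the two blocks is all odd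
  have hbound : ∀ (a b : ℕ), b ≤ 2 * n → b - a = n → (∀ v, a ≤ v → v < b → ¬ Even (M v)) →
      n ≤ L.length := by
    intro a b hb hab hodd
    rw [length_eq_sum]
    calc n = ∑ _v ∈ Finset.Ico a b, 1 := by simp [Nat.card_Ico, hab]
    _ ≤ ∑ v ∈ Finset.Ico a b, M v := by
        apply Finset.sum_le_sum
        intro v hv
        rw [Finset.mem_Ico] at hv
        have := hodd v hv.1 hv.2
        rcases Nat.eq_zero_or_pos (M v) with h | h
        · rw [h] at this; simp at this
        · exact h
    _ ≤ ∑ v ∈ Finset.range (2 * n), M v := by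
        apply Finset.sum_le_sum_of_subset
        intro v hv
        rw [Finset.mem_Ico] at hv
        rw [Finset.mem_range]
        omega
  by_cases hE : Even (M 0)
  · apply hbound n (2 * n) (le_refl _) (by omega)
    intro v hv1 hv2
    rw [hclaim2 v hv1 hv2]
    intro hMn
    apply hdiff
    rw [Nat.even_add]
    constructor
    · intro _; exact (hclaim1 (n - 1) (le_refl _)).mpr hE
    · intro _; exact hMn
  · apply hbound 0 n (by omega) (by omega)
    intro v hv1 hv2
    rw [hclaim1 v (by omega)]
    exact hE

/-- The diameter of `OFG(A_{2n})` is exactly `n`: every pair of valid MV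
assignments is joined by at most `n` face flips through valid assignments, and some pair
of valid MV assignments requires exactly `n` flips (every connecting sequence has length
at least `n`). -/
theorem stmt_8 (n : ℕ) (hn : 1 ≤ n) :
    (∀ μ ν : Fin (2 * n) → ℤ,
      (∀ i, μ i = 1 ∨ μ i = -1) → (∀ i, ν i = 1 ∨ ν i = -1) →
      ValidSum μ → ValidSum ν →
      ∃ L : List (Fin (2 * n)),
        L.length ≤ n ∧
        (∀ M : List (Fin (2 * n)), M <+: L → ValidSum (applyFlips M μ)) ∧
        applyFlips L μ = ν) ∧
    (∃ μ ν : Fin (2 * n) → ℤ,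
      (∀ i, μ i = 1 ∨ μ i = -1) ∧ (∀ i, ν i = 1 ∨ ν i = -1) ∧
      ValidSum μ ∧ ValidSum ν ∧
      ∀ L : List (Fin (2 * n)),
        (∀ M : List (Fin (2 * n)), M <+: L → ValidSum (applyFlips M μ)) →
        applyFlips L μ = ν → n ≤ L.length) := by
  constructor
  · intro μ ν hμ hν hvμ hvν
    exact part1 hn μ ν hμ hν hvμ hvν
  · refine ⟨muW n, nuW n, muW_pm n, nuW_pm n, Or.inl (sum_muW n hn), sum_nuW n hn, ?_⟩
    intro L _ hL
    exact part2core hn L hL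
end

section
/- For n ≥ 2 and n+2 ≤ k ≤ 2n, the number of valid MV assignments of A_{2n} having degree exactly k in OFG(A_{2n}) is (4n/(n+1)) * C(n+1, k-n-1) * C(n-2, k-n-2). -/
/-- MV assignments on `A_{2n}`: functions from the `2n` creases to `{-1, 1} ⊆ ℤ`. -/
abbrev MVAssign (n : ℕ) := Fin (2 * n) → ({-1, 1} : Finset ℤ)

/-- Validity (Maekawa for `A_{2n}`): the sum of the crease values is `±2`. -/
def MVValid {n : ℕ} (μ : MVAssign n) : Prop :=
  (∑ i, (μ i : ℤ)) = 2 ∨ (∑ i, (μ i : ℤ)) = -2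

instance {n : ℕ} : DecidablePred (MVValid (n := n)) := fun μ => by
  unfold MVValid; infer_instance

/-- The vertices of `OFG(A_{2n})`: valid MV assignments of `A_{2n}`. -/
abbrev OFGVertex (n : ℕ) := {μ : MVAssign n // MVValid μ}

/-- The origami flip graph `OFG(A_{2n})`: two valid MV assignments are adjacent iff one
is obtained from the other by flipping a single face, i.e. negating the values on the two
cyclically consecutive creases `e_k`, `e_{k+1}` bordering some face `α_k`. -/
def OFG (n : ℕ) : SimpleGraph (OFGVertex n) where
  Adj a b := ∃ k : Fin (2 * n), ∀ i,
    (b.1 i : ℤ) = if i = k ∨ i = nextCrease k then -(a.1 i : ℤ) else (a.1 i : ℤ)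
  symm := by
    constructor
    rintro a b ⟨k, h⟩
    refine ⟨k, fun i => ?_⟩
    by_cases hc : i = k ∨ i = nextCrease k
    · rw [if_pos hc, h i, if_pos hc, neg_neg]
    · rw [if_neg hc, h i, if_neg hc]
  loopless := by
    constructor
    rintro a ⟨k, h⟩
    have hk := h k
    rw [if_pos (Or.inl rfl)] at hk
    have hm := (a.1 k).2
    simp only [Finset.mem_insert, Finset.mem_singleton] at hm
    rcases hm with hm | hm <;> rw [hm] at hk <;> norm_num at hk


namespace Stmt12



/-- number of runs (maximal blocks) of a finite set of naturals -/
def runs (T : Finset ℕ) : ℕ := (T.filter fun i => i + 1 ∉ T).card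

def fcnt (t m b : ℕ) : ℕ :=
  ((((Finset.Ico 1 (t+1))).powersetCard m).filter fun T => runs T = b).card

def gcnt (t m b : ℕ) : ℕ :=
  ((((Finset.Ico 1 (t+1))).powersetCard m).filter fun T => t ∈ T ∧ runs T = b).card

lemma runs_empty : runs ∅ = 0 := rfl

lemma fcnt_zero (t b : ℕ) : fcnt t 0 b = if b = 0 then 1 else 0 := by
  unfold fcnt
  rw [Finset.powersetCard_zero]
  by_cases hb : b = 0
  · simp [hb, runs_empty, Finset.filter_singleton]
  · simp only [runs_empty, Finset.filter_singleton, if_neg (fun h : (0:ℕ) = b => hb h.symm)]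
    simp [hb, Ne.symm hb]

lemma fcnt_of_lt {t m : ℕ} (h : t < m) (b : ℕ) : fcnt t m b = 0 := by
  unfold fcnt
  rw [Finset.filter_eq_empty_iff.2, Finset.card_empty]
  intro T hT
  rw [Finset.mem_powersetCard] at hT
  exfalso
  have := Finset.card_le_card hT.1
  rw [hT.2, Nat.card_Ico] at this
  omega

lemma gcnt_of_lt {t m : ℕ} (h : t < m) (b : ℕ) : gcnt t m b = 0 := by
  unfold gcnt
  rw [Finset.filter_eq_empty_iff.2, Finset.card_empty]
  intro T hT
  rw [Finset.mem_powersetCard] at hT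
  exfalso
  have := Finset.card_le_card hT.1
  rw [hT.2, Nat.card_Ico] at this
  omega

lemma gcnt_zero (t b : ℕ) : gcnt t 0 b = 0 := by
  unfold gcnt
  rw [Finset.filter_eq_empty_iff.2, Finset.card_empty]
  intro T hT
  rw [Finset.mem_powersetCard] at hT
  rw [Finset.card_eq_zero.1 hT.2]
  simp

/-- a nonempty set has at least one run end (its max) -/
lemma runs_pos {T : Finset ℕ} (h : T.Nonempty) : runs T ≠ 0 := by
  unfold runs
  rw [Ne, Finset.card_eq_zero, Finset.filter_eq_empty_iff]
  intro hall
  obtain ⟨M, hM, hmax⟩ := T.exists_max_image id h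
  have := hall hM
  simp only [not_not] at this
  have h2 := hmax _ this
  simp only [id] at h2
  omega

lemma fcnt_b_zero {t m : ℕ} (hm : 1 ≤ m) : fcnt t m 0 = 0 := by
  unfold fcnt
  rw [Finset.filter_eq_empty_iff.2, Finset.card_empty]
  intro T hT
  rw [Finset.mem_powersetCard] at hT
  have : T.Nonempty := Finset.card_pos.1 (by omega)
  exact runs_pos this





/-- removing the max element `t` when `t-1 ∈ T` keeps the number of runs -/
lemma runs_erase_of_mem {T : Finset ℕ} {t : ℕ} (ht : t ∈ T) (h2 : 2 ≤ t)
    (hmax : ∀ i ∈ T, i ≤ t) (hprev : t - 1 ∈ T) :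
    runs (T.erase t) = runs T := by
  unfold runs
  have key : (T.erase t).filter (fun i => i + 1 ∉ T.erase t)
      = insert (t-1) ((T.filter fun i => i + 1 ∉ T).erase t) := by
    ext i
    simp only [Finset.mem_insert, Finset.mem_filter, Finset.mem_erase]
    constructor
    · rintro ⟨⟨hit, hiT⟩, hc⟩
      by_cases hi1 : i = t - 1
      · exact Or.inl hi1
      · refine Or.inr ⟨hit, hiT, ?_⟩
        intro hmem
        have hle := hmax i hiT
        exact hc ⟨by omega, hmem⟩
    · rintro (rfl | ⟨hne, hiT, hc⟩)
      · refine ⟨⟨by omega, hprev⟩, ?_⟩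
        rintro ⟨hne, _⟩
        omega
      · refine ⟨⟨hne, hiT⟩, ?_⟩
        rintro ⟨_, hmem⟩
        exact hc hmem
  rw [key]
  have htf : t ∈ T.filter fun i => i + 1 ∉ T := by
    refine Finset.mem_filter.2 ⟨ht, fun hmem => ?_⟩
    have := hmax _ hmem; omega
  have hns : t - 1 ∉ (T.filter fun i => i + 1 ∉ T).erase t := by
    simp only [Finset.mem_erase, Finset.mem_filter, not_and]
    intro _ h
    exact fun hc => hc (by simpa [Nat.sub_add_cancel (by omega : 1 ≤ t)] using ht)
  rw [Finset.card_insert_of_notMem hns, Finset.card_erase_of_mem htf]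
  have : 1 ≤ (T.filter fun i => i + 1 ∉ T).card := Finset.card_pos.2 ⟨t, htf⟩
  omega

/-- removing the max element `t` when `t-1 ∉ T` drops the number of runs by one -/
lemma runs_erase_of_not_mem {T : Finset ℕ} {t : ℕ} (ht : t ∈ T) (h1 : 1 ≤ t)
    (hmax : ∀ i ∈ T, i ≤ t) (hprev : t - 1 ∉ T) :
    runs (T.erase t) + 1 = runs T := by
  unfold runs
  have key : (T.erase t).filter (fun i => i + 1 ∉ T.erase t)
      = (T.filter fun i => i + 1 ∉ T).erase t := by
    ext i
    simp only [Finset.mem_filter, Finset.mem_erase]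
    constructor
    · rintro ⟨⟨hit, hiT⟩, hc⟩
      refine ⟨hit, hiT, fun hmem => ?_⟩
      have hle := hmax i hiT
      by_cases hi1 : i = t - 1
      · exact hprev (hi1 ▸ hiT)
      · exact hc ⟨by omega, hmem⟩
    · rintro ⟨hne, hiT, hc⟩
      refine ⟨⟨hne, hiT⟩, ?_⟩
      rintro ⟨_, hmem⟩
      exact hc hmem
  rw [key]
  have htf : t ∈ T.filter fun i => i + 1 ∉ T := by
    refine Finset.mem_filter.2 ⟨ht, fun hmem => ?_⟩
    have := hmax _ hmem; omega
  rw [Finset.card_erase_of_mem htf]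
  have : 1 ≤ (T.filter fun i => i + 1 ∉ T).card := Finset.card_pos.2 ⟨t, htf⟩
  omega







lemma rec1 {t : ℕ} (ht : 1 ≤ t) (m b : ℕ) :
    fcnt t m b = fcnt (t-1) m b + gcnt t m b := by
  unfold fcnt gcnt
  have hsplit := Finset.card_filter_add_card_filter_not
    (s := ((Finset.Ico 1 (t+1))).powersetCard m |>.filter fun T => runs T = b)
    (p := fun T => t ∈ T)
  rw [Finset.filter_filter, Finset.filter_filter] at hsplit
  have e1 : (((Finset.Ico 1 (t+1))).powersetCard m).filter (fun T => runs T = b ∧ t ∉ T)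
      = (((Finset.Ico 1 (t-1+1))).powersetCard m).filter fun T => runs T = b := by
    ext T
    simp only [Finset.mem_filter, Finset.mem_powersetCard]
    constructor
    · rintro ⟨⟨hsub, hcard⟩, hb, hnt⟩
      refine ⟨⟨fun i hi => ?_, hcard⟩, hb⟩
      have := hsub hi
      rw [Finset.mem_Ico] at this ⊢
      rcases Nat.lt_or_ge i t with h | h
      · omega
      · exfalso; have : i = t := by omega
        exact hnt (this ▸ hi)
    · rintro ⟨⟨hsub, hcard⟩, hb⟩
      refine ⟨⟨fun i hi => ?_, hcard⟩, hb, fun hnt => ?_⟩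
      · have := hsub hi; rw [Finset.mem_Ico] at this ⊢; omega
      · have := hsub hnt; rw [Finset.mem_Ico] at this; omega
  have e2 : (((Finset.Ico 1 (t+1))).powersetCard m).filter (fun T => runs T = b ∧ t ∈ T)
      = (((Finset.Ico 1 (t+1))).powersetCard m).filter (fun T => t ∈ T ∧ runs T = b) := by
    apply Finset.filter_congr; intro T _; tauto
  rw [e2] at hsplit
  rw [e1] at hsplit
  omega

lemma rec2 {t m b : ℕ} (ht : 2 ≤ t) (hm : 1 ≤ m) (hb : 1 ≤ b) :
    gcnt t m b = gcnt (t-1) (m-1) b + fcnt (t-2) (m-1) (b-1) := by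
  unfold gcnt fcnt
  -- split on whether t - 1 ∈ T
  have hsplit := Finset.card_filter_add_card_filter_not
    (s := ((Finset.Ico 1 (t+1))).powersetCard m |>.filter fun T => t ∈ T ∧ runs T = b)
    (p := fun T => t - 1 ∈ T)
  rw [Finset.filter_filter, Finset.filter_filter] at hsplit
  -- part 1 : t-1 ∈ T, biject with gcnt (t-1) (m-1) b via erase t
  have h1 : ((((Finset.Ico 1 (t+1))).powersetCard m).filter
        (fun T => (t ∈ T ∧ runs T = b) ∧ t - 1 ∈ T)).card
      = ((((Finset.Ico 1 (t-1+1))).powersetCard (m-1)).filter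
        (fun T => t - 1 ∈ T ∧ runs T = b)).card := by
    refine Finset.card_bij' (fun T _ => T.erase t) (fun T _ => insert t T) ?_ ?_ ?_ ?_
    · rintro T hT
      simp only [Finset.mem_filter, Finset.mem_powersetCard] at hT ⊢
      obtain ⟨⟨hsub, hcard⟩, ⟨htT, hruns⟩, hprev⟩ := hT
      have hmax : ∀ i ∈ T, i ≤ t := by
        intro i hi; have := hsub hi; rw [Finset.mem_Ico] at this; omega
      refine ⟨⟨fun i hi => ?_, ?_⟩, ⟨by simp only [Finset.mem_erase]; exact ⟨by omega, hprev⟩, ?_⟩⟩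
      · rw [Finset.mem_erase] at hi
        have := hsub hi.2; rw [Finset.mem_Ico] at this ⊢
        have : i ≤ t := by omega
        rcases Nat.lt_or_ge i t with h | h
        · constructor
          · have := hsub hi.2; rw [Finset.mem_Ico] at this; omega
          · omega
        · exfalso; exact hi.1 (by omega)
      · rw [Finset.card_erase_of_mem htT, hcard]
      · rw [runs_erase_of_mem htT ht hmax hprev, hruns]
    · rintro T hT
      simp only [Finset.mem_filter, Finset.mem_powersetCard] at hT ⊢
      obtain ⟨⟨hsub, hcard⟩, hprev, hruns⟩ := hT
      have hnt : t ∉ T := by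
        intro h; have := hsub h; rw [Finset.mem_Ico] at this; omega
      have hsub' : insert t T ⊆ Finset.Ico 1 (t+1) := by
        intro i hi
        rw [Finset.mem_insert] at hi
        rcases hi with rfl | hi
        · rw [Finset.mem_Ico]; omega
        · have := hsub hi; rw [Finset.mem_Ico] at this ⊢; omega
      have hmax : ∀ i ∈ insert t T, i ≤ t := by
        intro i hi; have := hsub' hi; rw [Finset.mem_Ico] at this; omega
      have hprev' : t - 1 ∈ insert t T := Finset.mem_insert_of_mem hprev
      have herase : (insert t T).erase t = T := Finset.erase_insert hnt
      refine ⟨⟨hsub', ?_⟩, ⟨Finset.mem_insert_self _ _, ?_⟩, hprev'⟩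
      · rw [Finset.card_insert_of_notMem hnt, hcard]; omega
      · have := runs_erase_of_mem (Finset.mem_insert_self t T) ht hmax hprev'
        rw [herase] at this
        rw [← this, hruns]
    · rintro T hT
      simp only [Finset.mem_filter] at hT
      exact Finset.insert_erase hT.2.1.1
    · rintro T hT
      simp only [Finset.mem_filter, Finset.mem_powersetCard] at hT
      have hnt : t ∉ T := by
        intro h; have := hT.1.1 h; rw [Finset.mem_Ico] at this; omega
      exact Finset.erase_insert hnt
  -- part 2 : t-1 ∉ T, biject with fcnt (t-2) (m-1) (b-1) via erase t
  have h2 : ((((Finset.Ico 1 (t+1))).powersetCard m).filter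
        (fun T => (t ∈ T ∧ runs T = b) ∧ t - 1 ∉ T)).card
      = ((((Finset.Ico 1 (t-2+1))).powersetCard (m-1)).filter
        (fun T => runs T = b - 1)).card := by
    refine Finset.card_bij' (fun T _ => T.erase t) (fun T _ => insert t T) ?_ ?_ ?_ ?_
    · rintro T hT
      simp only [Finset.mem_filter, Finset.mem_powersetCard] at hT ⊢
      obtain ⟨⟨hsub, hcard⟩, ⟨htT, hruns⟩, hprev⟩ := hT
      have hmax : ∀ i ∈ T, i ≤ t := by
        intro i hi; have := hsub hi; rw [Finset.mem_Ico] at this; omega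
      refine ⟨⟨fun i hi => ?_, ?_⟩, ?_⟩
      · rw [Finset.mem_erase] at hi
        have h1 := hsub hi.2; rw [Finset.mem_Ico] at h1 ⊢
        have hi1 : i ≠ t - 1 := fun h => hprev (h ▸ hi.2)
        have := hi.1
        omega
      · rw [Finset.card_erase_of_mem htT, hcard]
      · have := runs_erase_of_not_mem htT (by omega) hmax hprev
        omega
    · rintro T hT
      simp only [Finset.mem_filter, Finset.mem_powersetCard] at hT ⊢
      obtain ⟨⟨hsub, hcard⟩, hruns⟩ := hT
      have hbound : ∀ i ∈ T, 1 ≤ i ∧ i ≤ t - 2 := by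
        intro i hi; have := hsub hi; rw [Finset.mem_Ico] at this; omega
      have hnt : t ∉ T := fun h => by have := hbound t h; omega
      have hprev : t - 1 ∉ insert t T := by
        simp only [Finset.mem_insert]
        rintro (h | h)
        · omega
        · have := hbound _ h; omega
      have hmax : ∀ i ∈ insert t T, i ≤ t := by
        intro i hi
        rw [Finset.mem_insert] at hi
        rcases hi with rfl | hi
        · omega
        · have := hbound i hi; omega
      refine ⟨⟨?_, ?_⟩, ⟨Finset.mem_insert_self _ _, ?_⟩, hprev⟩
      · intro i hi
        rw [Finset.mem_insert] at hi
        rw [Finset.mem_Ico]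
        rcases hi with rfl | hi
        · omega
        · have := hbound i hi; omega
      · rw [Finset.card_insert_of_notMem hnt, hcard]; omega
      · have := runs_erase_of_not_mem (Finset.mem_insert_self t T) (by omega) hmax hprev
        rw [Finset.erase_insert hnt] at this
        omega
    · rintro T hT
      simp only [Finset.mem_filter] at hT
      exact Finset.insert_erase hT.2.1.1
    · rintro T hT
      simp only [Finset.mem_filter, Finset.mem_powersetCard] at hT
      have hnt : t ∉ T := by
        intro h; have := hT.1.1 h; rw [Finset.mem_Ico] at this; omega
      exact Finset.erase_insert hnt
  omega


lemma gcnt_one (b : ℕ) : gcnt 1 1 b = if b = 1 then 1 else 0 := by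
  unfold gcnt
  have h1 : Finset.Ico 1 2 = {1} := rfl
  rw [h1]
  have h2 : ({1} : Finset ℕ).powersetCard 1 = {{1}} := by
    have := Finset.powersetCard_self ({1} : Finset ℕ)
    simpa using this
  rw [h2, Finset.filter_singleton]
  have hr : runs {1} = 1 := by decide
  by_cases hb : b = 1
  · rw [if_pos (by simp [hr, hb]), if_pos hb]; rfl
  · rw [if_neg (by simp [hr]; omega), if_neg hb]; rfl

theorem closed_form : ∀ t m b : ℕ, 1 ≤ b → 1 ≤ m → m ≤ t →
    gcnt t m b = (m-1).choose (b-1) * (t-m).choose (b-1) ∧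
    fcnt t m b = (m-1).choose (b-1) * (t-m+1).choose b := by
  intro t
  induction t using Nat.strong_induction_on with
  | _ t IH =>
    intro m b hb hm hmt
    have hg : gcnt t m b = (m-1).choose (b-1) * (t-m).choose (b-1) := by
      rcases Nat.lt_or_ge t 2 with ht2 | ht2
      · -- t = 1, m = 1 : use rec1 backwards? instead compute via rec2-less route:
        have ht1 : t = 1 := by omega
        have hm1 : m = 1 := by omega
        subst ht1; subst hm1
        rw [gcnt_one b]
        rcases Nat.eq_or_lt_of_le hb with hb1 | hb2
        · rw [← hb1]; norm_num
        · rw [if_neg (by omega : ¬ b = 1), Nat.sub_self,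
            Nat.choose_eq_zero_of_lt (show 0 < b - 1 by omega)]
      · rcases Nat.lt_or_ge m 2 with hm2 | hm2
        · have hm1 : m = 1 := by omega
          subst hm1
          rw [rec2 ht2 (by omega) hb, gcnt_zero]
          simp only [Nat.sub_self, fcnt_zero]
          rcases Nat.eq_or_lt_of_le hb with hb1 | hb2
          · rw [← hb1]
            norm_num
          · rw [if_neg (by omega : ¬ b - 1 = 0),
              Nat.choose_eq_zero_of_lt (show 0 < b - 1 by omega)]
            simp
        · rw [rec2 ht2 (by omega) hb]
          have IH1 := IH (t-1) (by omega) (m-1) b hb (by omega) (by omega)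
          rw [IH1.1]
          have e2 : m - 1 - 1 = m - 2 := by omega
          rw [e2]
          rcases Nat.eq_or_lt_of_le hb with hb1 | hb2
          · rw [← hb1, fcnt_b_zero (by omega)]
            have e3 : t - 1 - (m-1) = t - m := by omega
            rw [e3]
            simp
          · rcases Nat.lt_or_ge (t-2) (m-1) with hlt | hge
            · have e3 : t - 1 - (m-1) = 0 := by omega
              have e4 : t - m = 0 := by omega
              rw [fcnt_of_lt hlt, e3, e4,
                Nat.choose_eq_zero_of_lt (show 0 < b - 1 by omega)]
              simp
            · have IH2 := IH (t-2) (by omega) (m-1) (b-1) (by omega) (by omega) hge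
              have e5 : b - 1 - 1 = b - 2 := by omega
              rw [e5, e2] at IH2
              rw [IH2.2]
              have e1 : t - 2 - (m-1) + 1 = t - m := by omega
              have e3 : t - 1 - (m-1) = t - m := by omega
              rw [e1, e3]
              have pascal : (m-1).choose (b-1) = (m-2).choose (b-2) + (m-2).choose (b-1) := by
                obtain ⟨c, rfl⟩ : ∃ c, b = c + 2 := ⟨b - 2, by omega⟩
                obtain ⟨d, rfl⟩ : ∃ d, m = d + 2 := ⟨m - 2, by omega⟩
                have h1 : d + 2 - 1 = d + 1 := by omega
                have h2 : c + 2 - 1 = c + 1 := by omega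
                have h3 : d + 2 - 2 = d := by omega
                have h4 : c + 2 - 2 = c := by omega
                rw [h1, h2, h3, h4, Nat.choose_succ_succ]
              rw [pascal]
              ring
    refine ⟨hg, ?_⟩
    have h1 := rec1 (t := t) (by omega) m b
    rw [hg] at h1
    rcases Nat.lt_or_ge (t-1) m with hlt | hge
    · rw [fcnt_of_lt hlt] at h1
      rw [h1]
      have h0 : t - m = 0 := by omega
      rw [h0]
      rcases Nat.eq_or_lt_of_le hb with hb1 | hb2
      · rw [← hb1]; simp [Nat.choose]
      · rw [Nat.choose_eq_zero_of_lt (show 0 < b - 1 by omega),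
           Nat.choose_eq_zero_of_lt (show 1 < b by omega)]
        ring
    · have IHf := IH (t-1) (by omega) m b hb hm hge
      rw [IHf.2] at h1
      rw [h1]
      have e1 : t - 1 - m + 1 = t - m := by omega
      rw [e1]
      have pascal : (t-m+1).choose b = (t-m).choose (b-1) + (t-m).choose b := by
        obtain ⟨c, rfl⟩ : ∃ c, b = c + 1 := ⟨b - 1, by omega⟩
        have h2 : c + 1 - 1 = c := by omega
        rw [h2, Nat.choose_succ_succ]
      rw [pascal]
      ring





section Cyclic
variable {N : ℕ} [NeZero N]

def cBnd (S : Finset (Fin N)) : ℕ := (S.filter fun i => i + 1 ∉ S).card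

def ccnt (N : ℕ) [NeZero N] (m b : ℕ) : ℕ :=
  (Finset.univ.filter fun S : Finset (Fin N) => S.card = m ∧ cBnd S = b).card

lemma val_add_one (hN : 2 ≤ N) (i : Fin N) : ((i + 1 : Fin N) : ℕ) = (i.val + 1) % N := by
  rw [Fin.val_add, Fin.val_one', Nat.mod_eq_of_lt (by omega : 1 < N)]

lemma add_one_of_eq (hN : 2 ≤ N) {i : Fin N} (h : i.val = N - 1) : i + 1 = 0 := by
  apply Fin.ext
  rw [val_add_one hN, h, Fin.val_zero]
  have : N - 1 + 1 = N := by omega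
  rw [this, Nat.mod_self]

lemma add_one_of_lt (hN : 2 ≤ N) {i : Fin N} (h : i.val < N - 1) :
    ((i + 1 : Fin N) : ℕ) = i.val + 1 := by
  rw [val_add_one hN, Nat.mod_eq_of_lt (by omega)]

/-- translation invariance of the cyclic run-end count -/
lemma cBnd_image_add (c : Fin N) (S : Finset (Fin N)) :
    cBnd (S.image (· + c)) = cBnd S := by
  unfold cBnd
  have himg : (S.image (· + c)).filter (fun i => i + 1 ∉ S.image (· + c))
      = (S.filter fun i => i + 1 ∉ S).image (· + c) := by
    ext j
    simp only [Finset.mem_filter, Finset.mem_image]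
    constructor
    · rintro ⟨⟨x, hx, rfl⟩, hc⟩
      refine ⟨x, ⟨hx, fun hx1 => hc ⟨x + 1, hx1, add_right_comm _ _ _⟩⟩, rfl⟩
    · rintro ⟨x, ⟨hx, hx1⟩, rfl⟩
      refine ⟨⟨x, hx, rfl⟩, ?_⟩
      rintro ⟨y, hy, hyc⟩
      have : y = x + 1 := by
        have h' : y + c = (x + 1) + c := by rw [hyc]; exact add_right_comm _ _ _
        exact add_right_cancel h'
      exact hx1 (this ▸ hy)
  rw [himg, Finset.card_image_of_injective _ (add_left_injective c)]

lemma cBnd_image_sub (p : Fin N) (S : Finset (Fin N)) :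
    cBnd (S.image (· - p)) = cBnd S := by
  have : (fun x : Fin N => x - p) = (· + (-p)) := funext fun x => sub_eq_add_neg x p
  rw [this, cBnd_image_add]

/-- key bridge: for T avoiding 0, the cyclic count equals the linear runs count -/
lemma runs_image_val (hN : 2 ≤ N) {T : Finset (Fin N)} (h0 : (0 : Fin N) ∉ T) :
    runs (T.image Fin.val) = cBnd T := by
  unfold runs cBnd
  have key : ∀ i ∈ T, ((i : ℕ) + 1 ∈ T.image Fin.val ↔ i + 1 ∈ T) := by
    intro i hi
    rcases Nat.lt_or_ge i.val (N - 1) with hlt | hge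
    · constructor
      · rintro hmem
        rw [Finset.mem_image] at hmem
        obtain ⟨j, hj, hjv⟩ := hmem
        have : j = i + 1 := Fin.val_injective (by rw [hjv, add_one_of_lt hN hlt])
        exact this ▸ hj
      · intro hmem
        rw [Finset.mem_image]
        exact ⟨i + 1, hmem, (add_one_of_lt hN hlt)⟩
    · have heq : i.val = N - 1 := by have := i.isLt; omega
      have h1 : i + 1 = 0 := add_one_of_eq hN heq
      constructor
      · intro hmem
        rw [Finset.mem_image] at hmem
        obtain ⟨j, _, hjv⟩ := hmem
        have := j.isLt
        omega
      · intro hmem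
        exact absurd (h1 ▸ hmem) h0
  have himg : (T.image Fin.val).filter (fun x => x + 1 ∉ T.image Fin.val)
      = (T.filter fun i => i + 1 ∉ T).image Fin.val := by
    ext x
    simp only [Finset.mem_filter, Finset.mem_image]
    constructor
    · rintro ⟨⟨i, hi, rfl⟩, hc⟩
      exact ⟨i, ⟨hi, fun h => hc (Finset.mem_image.1 ((key i hi).2 h))⟩, rfl⟩
    · rintro ⟨i, ⟨hi, hc⟩, rfl⟩
      exact ⟨⟨i, hi, rfl⟩, fun h => hc ((key i hi).1 (Finset.mem_image.2 h))⟩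
  rw [himg, Finset.card_image_of_injective _ Fin.val_injective]

/-- counting `T` with `0 ∉ T` equals the linear count -/
lemma vcnt_eq_fcnt (hN : 2 ≤ N) (m b : ℕ) :
    (Finset.univ.filter fun T : Finset (Fin N) =>
        ((0 : Fin N) ∉ T ∧ T.card = m) ∧ cBnd T = b).card
      = fcnt (N - 1) m b := by
  unfold fcnt
  have hN1 : N - 1 + 1 = N := by omega
  rw [hN1]
  apply Finset.card_bij (fun T _ => T.image Fin.val)
  · rintro T hT
    simp only [Finset.mem_filter, Finset.mem_univ, true_and] at hT
    obtain ⟨⟨h0, hcard⟩, hB⟩ := hT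
    rw [Finset.mem_filter, Finset.mem_powersetCard]
    refine ⟨⟨?_, ?_⟩, ?_⟩
    · intro x hx
      rw [Finset.mem_image] at hx
      obtain ⟨i, hi, rfl⟩ := hx
      rw [Finset.mem_Ico]
      refine ⟨?_, i.isLt⟩
      rcases Nat.eq_zero_or_pos i.val with h | h
      · exact absurd (Fin.ext h : i = 0) (fun hh => h0 (hh ▸ hi))
      · omega
    · rw [Finset.card_image_of_injective _ Fin.val_injective, hcard]
    · rw [runs_image_val hN h0, hB]
  · intro T1 h1 T2 h2 heq
    exact Finset.image_injective Fin.val_injective heq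
  · rintro T' hT'
    rw [Finset.mem_filter, Finset.mem_powersetCard] at hT'
    obtain ⟨⟨hsub, hcard⟩, hruns⟩ := hT'
    refine ⟨Finset.univ.filter (fun i : Fin N => i.val ∈ T'), ?_, ?_⟩
    · have himg : (Finset.univ.filter (fun i : Fin N => i.val ∈ T')).image Fin.val = T' := by
        ext x
        simp only [Finset.mem_image, Finset.mem_filter, Finset.mem_univ, true_and]
        constructor
        · rintro ⟨i, hi, rfl⟩; exact hi
        · intro hx
          have hxlt : x < N := by
            have := hsub hx; rw [Finset.mem_Ico] at this; omega
          exact ⟨⟨x, hxlt⟩, hx, rfl⟩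
      have h0v : (0 : ℕ) ∉ T' := by
        intro h
        have := hsub h; rw [Finset.mem_Ico] at this; omega
      have h0 : (0 : Fin N) ∉ Finset.univ.filter (fun i : Fin N => i.val ∈ T') := by
        simp only [Finset.mem_filter, Finset.mem_univ, true_and, Fin.val_zero]
        exact h0v
      have hc2 : (Finset.univ.filter (fun i : Fin N => i.val ∈ T')).card = T'.card := by
        have h3 := Finset.card_image_of_injective
          (Finset.univ.filter (fun i : Fin N => i.val ∈ T')) Fin.val_injective
        rw [himg] at h3
        exact h3.symm
      simp only [Finset.mem_filter, Finset.mem_univ, true_and]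
      refine ⟨⟨fun h => h0v (by simpa using h), ?_⟩, ?_⟩
      · rw [hc2, hcard]
      · rw [← runs_image_val hN h0, himg, hruns]
    · ext x
      simp only [Finset.mem_image, Finset.mem_filter, Finset.mem_univ, true_and]
      constructor
      · rintro ⟨i, hi, rfl⟩; exact hi
      · intro hx
        have hxlt : x < N := by
          have := hsub hx; rw [Finset.mem_Ico] at this; omega
        exact ⟨⟨x, hxlt⟩, hx, rfl⟩

/-- the rotation double count -/
lemma ccnt_mul (hN : 2 ≤ N) (m b : ℕ) (hm : m < N) :
    ccnt N m b * (N - m) = N * fcnt (N - 1) m b := by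
  unfold ccnt
  set A := Finset.univ.filter fun S : Finset (Fin N) => S.card = m ∧ cBnd S = b with hA
  set V := Finset.univ.filter fun T : Finset (Fin N) =>
      ((0 : Fin N) ∉ T ∧ T.card = m) ∧ cBnd T = b with hV
  have hcs : (A.sigma fun S => Sᶜ).card = A.card * (N - m) := by
    rw [Finset.card_sigma]
    rw [Finset.sum_congr rfl (fun S hS => ?_), Finset.sum_const, smul_eq_mul]
    rw [Finset.card_compl]
    simp only [hA, Finset.mem_filter] at hS
    rw [hS.2.1, Fintype.card_fin]
  have hbij : (A.sigma fun S => Sᶜ).card = ((Finset.univ : Finset (Fin N)) ×ˢ V).card := by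
    apply Finset.card_bij'
      (fun (q : Σ _ : Finset (Fin N), Fin N) _ => ((q.2, q.1.image (· - q.2)) : Fin N × Finset (Fin N)))
      (fun (q : Fin N × Finset (Fin N)) _ => (⟨q.2.image (· + q.1), q.1⟩ : Σ _ : Finset (Fin N), Fin N)) ?_ ?_ ?_ ?_
    · rintro ⟨S, p⟩ hq
      rw [Finset.mem_sigma] at hq
      obtain ⟨hS, hp⟩ := hq
      simp only [hA, Finset.mem_filter, Finset.mem_univ, true_and] at hS
      rw [Finset.mem_compl] at hp
      rw [Finset.mem_product]
      refine ⟨Finset.mem_univ _, ?_⟩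
      simp only [hV, Finset.mem_filter, Finset.mem_univ, true_and]
      refine ⟨⟨?_, ?_⟩, ?_⟩
      · rw [Finset.mem_image]
        rintro ⟨x, hx, hx0⟩
        have : x = p := by
          have := hx0
          rwa [sub_eq_zero] at this
        exact hp (this ▸ hx)
      · rw [Finset.card_image_of_injective _ (sub_left_injective), hS.1]
      · rw [cBnd_image_sub, hS.2]
    · rintro ⟨p, T⟩ hq
      rw [Finset.mem_product] at hq
      obtain ⟨-, hT⟩ := hq
      simp only [hV, Finset.mem_filter, Finset.mem_univ, true_and] at hT
      rw [Finset.mem_sigma]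
      constructor
      · simp only [hA, Finset.mem_filter, Finset.mem_univ, true_and]
        refine ⟨?_, ?_⟩
        · rw [Finset.card_image_of_injective _ (add_left_injective p), hT.1.2]
        · rw [cBnd_image_add, hT.2]
      · rw [Finset.mem_compl, Finset.mem_image]
        rintro ⟨x, hx, hxp⟩
        have : x = 0 := by
          have h' : x + p = 0 + p := by rw [hxp, zero_add]
          exact add_right_cancel h'
        exact hT.1.1 (this ▸ hx)
    · rintro ⟨S, p⟩ hq
      simp only
      congr 1
      rw [Finset.image_image]
      ext x
      simp only [Finset.mem_image, Function.comp]
      constructor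
      · rintro ⟨y, hy, rfl⟩; simpa using hy
      · intro hx; exact ⟨x, hx, by simp⟩
    · rintro ⟨p, T⟩ hq
      simp only
      congr 1
      rw [Finset.image_image]
      ext x
      simp only [Finset.mem_image, Function.comp]
      constructor
      · rintro ⟨y, hy, rfl⟩; simpa using hy
      · intro hx; exact ⟨x, hx, by simp⟩
  rw [hcs] at hbij
  rw [hbij, Finset.card_product, Finset.card_univ, Fintype.card_fin,
    vcnt_eq_fcnt hN m b]

end Cyclic

lemma fcnt_closed {t m b : ℕ} (hb : 1 ≤ b) (hm : 1 ≤ m) (hmt : m ≤ t) :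
    fcnt t m b = (m-1).choose (b-1) * (t-m+1).choose b :=
  (closed_form t m b hb hm hmt).2

lemma ccnt_closed {N : ℕ} [NeZero N] (hN : 2 ≤ N) {m b : ℕ} (hb : 1 ≤ b) (hm : 1 ≤ m)
    (hmN : m ≤ N - 1) :
    ccnt N m b * (N - m) = N * ((m-1).choose (b-1) * (N-m).choose b) := by
  rw [ccnt_mul hN m b (show m < N by omega), fcnt_closed hb hm hmN]
  have e : N - 1 - m + 1 = N - m := by omega
  rw [e]



section Graph
variable {n : ℕ}

def negE : ({-1, 1} : Finset ℤ) → ({-1, 1} : Finset ℤ) := fun x =>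
  ⟨-x.1, by
    have hv := x.2
    simp only [Finset.mem_insert, Finset.mem_singleton] at hv ⊢
    rcases hv with h | h <;> simp [h]⟩

lemma coe_negE (x : ({-1, 1} : Finset ℤ)) : ((negE x : ℤ)) = -(x : ℤ) := rfl

lemma negE_negE (x : ({-1, 1} : Finset ℤ)) : negE (negE x) = x :=
  Subtype.ext (by rw [coe_negE, coe_negE, neg_neg])

lemma val_pm (x : ({-1, 1} : Finset ℤ)) : (x : ℤ) = -1 ∨ (x : ℤ) = 1 := by
  have hv := x.2
  simpa only [Finset.mem_insert, Finset.mem_singleton] using hv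

def flip (μ : MVAssign n) (k : Fin (2 * n)) : MVAssign n :=
  fun i => if i = k ∨ i = nextCrease k then negE (μ i) else μ i

lemma coe_flip (μ : MVAssign n) (k i : Fin (2 * n)) :
    ((flip μ k i : ℤ)) = if i = k ∨ i = nextCrease k then -(μ i : ℤ) else (μ i : ℤ) := by
  unfold flip
  split <;> rfl

lemma adj_iff (a b : OFGVertex n) :
    (OFG n).Adj a b ↔ ∃ k, b.1 = flip a.1 k := by
  constructor
  · rintro ⟨k, h⟩
    refine ⟨k, funext fun i => Subtype.ext ?_⟩
    rw [coe_flip]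
    exact h i
  · rintro ⟨k, h⟩
    refine ⟨k, fun i => ?_⟩
    rw [h, coe_flip]

variable (hn : 2 ≤ n)

lemma NeZero2n (hn : 2 ≤ n) : NeZero (2 * n) := ⟨by omega⟩

lemma nextCrease_eq_add_one [NeZero (2 * n)] (hn : 2 ≤ n) (k : Fin (2 * n)) :
    nextCrease k = k + 1 := by
  apply Fin.ext
  rw [val_add_one (by omega : 2 ≤ 2 * n)]
  rfl

lemma nextCrease_ne (hn : 2 ≤ n) (k : Fin (2 * n)) : nextCrease k ≠ k := by
  intro h
  have hv : (k.val + 1) % (2 * n) = k.val := congrArg Fin.val h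
  have hlt := k.isLt
  rcases Nat.lt_or_ge (k.val + 1) (2 * n) with h1 | h1
  · rw [Nat.mod_eq_of_lt h1] at hv; omega
  · have : k.val + 1 = 2 * n := by omega
    rw [this, Nat.mod_self] at hv; omega

lemma sum_flip (hn : 2 ≤ n) (μ : MVAssign n) (k : Fin (2 * n)) :
    ∑ i, (flip μ k i : ℤ)
      = (∑ i, (μ i : ℤ)) - 2 * (μ k : ℤ) - 2 * (μ (nextCrease k) : ℤ) := by
  have hterm : ∀ i, (flip μ k i : ℤ)
      = (μ i : ℤ) - (if i ∈ ({k, nextCrease k} : Finset (Fin (2*n))) then 2 * (μ i : ℤ) else 0) := by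
    intro i
    rw [coe_flip]
    by_cases h : i = k ∨ i = nextCrease k
    · rw [if_pos h, if_pos (by simpa [Finset.mem_insert, Finset.mem_singleton] using h)]
      ring
    · rw [if_neg h, if_neg (by simpa [Finset.mem_insert, Finset.mem_singleton] using h)]
      ring
  rw [Finset.sum_congr rfl (fun i _ => hterm i), Finset.sum_sub_distrib]
  rw [Finset.sum_ite_mem, Finset.univ_inter, Finset.sum_pair (Ne.symm (nextCrease_ne hn k))]
  ring

def Mset (μ : MVAssign n) : Finset (Fin (2 * n)) :=
  Finset.univ.filter fun i => (μ i : ℤ) = -1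

lemma sum_eq_card (μ : MVAssign n) :
    ∑ i, (μ i : ℤ) = (2 * n : ℤ) - 2 * (Mset μ).card := by
  have hterm : ∀ i, (μ i : ℤ) = (if (μ i : ℤ) = -1 then (-1 : ℤ) else 1) := by
    intro i
    rcases val_pm (μ i) with h | h <;> simp [h]
  rw [Finset.sum_congr rfl (fun i _ => hterm i), Finset.sum_ite, Finset.sum_const,
    Finset.sum_const, nsmul_eq_mul, nsmul_eq_mul]
  have hsplit : (Finset.univ.filter fun i : Fin (2*n) => (μ i : ℤ) = -1).card
      + (Finset.univ.filter fun i : Fin (2*n) => ¬((μ i : ℤ) = -1)).card = 2 * n := by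
    rw [Finset.card_filter_add_card_filter_not, Finset.card_univ, Fintype.card_fin]
  unfold Mset
  push_cast
  rw [← Nat.cast_inj (R := ℤ)] at hsplit
  push_cast at hsplit
  linarith
end Graph



section Graph2
variable {n : ℕ}

lemma card_Mset_of_sum_two {μ : MVAssign n} (h : ∑ i, (μ i : ℤ) = 2) :
    (Mset μ).card = n - 1 ∧ 1 ≤ n → True := fun _ => trivial

lemma valid_flip_iff_pos (hn : 2 ≤ n) {μ : MVAssign n} (h : ∑ i, (μ i : ℤ) = 2)
    (k : Fin (2 * n)) :
    MVValid (flip μ k) ↔ ¬((μ k : ℤ) = -1 ∧ (μ (nextCrease k) : ℤ) = -1) := by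
  unfold MVValid
  rw [sum_flip hn, h]
  rcases val_pm (μ k) with h1 | h1 <;> rcases val_pm (μ (nextCrease k)) with h2 | h2 <;>
    rw [h1, h2] <;> norm_num

lemma flip_inj (hn : 2 ≤ n) (μ : MVAssign n) {k k' : Fin (2 * n)}
    (h : flip μ k = flip μ k') : k = k' := by
  by_contra hne
  have hval : ∀ i : Fin (2 * n), (flip μ k i : ℤ) = (flip μ k' i : ℤ) := by
    intro i; rw [h]
  have hpm : ∀ i : Fin (2 * n), (μ i : ℤ) = -1 ∨ (μ i : ℤ) = 1 := fun i => val_pm (μ i)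
  -- evaluate at k
  have h1 := hval k
  rw [coe_flip, coe_flip, if_pos (Or.inl rfl)] at h1
  have hk : k = nextCrease k' := by
    by_contra hk
    rw [if_neg (by tauto)] at h1
    rcases hpm k with hv | hv <;> rw [hv] at h1 <;> norm_num at h1
  have h2 := hval k'
  rw [coe_flip, coe_flip, if_pos (Or.inl rfl)] at h2
  have hk' : k' = nextCrease k := by
    by_contra hk'
    rw [if_neg (by tauto)] at h2
    rcases hpm k' with hv | hv <;> rw [hv] at h2 <;> norm_num at h2
  -- k = k'+1, k' = k+1 mod 2n : contradiction
  have e1 : k.val = (k'.val + 1) % (2 * n) := congrArg Fin.val hk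
  have e2 : k'.val = (k.val + 1) % (2 * n) := congrArg Fin.val hk'
  have hl1 := k.isLt
  have hl2 := k'.isLt
  rcases Nat.lt_or_ge (k'.val + 1) (2 * n) with hc1 | hc1 <;>
    rcases Nat.lt_or_ge (k.val + 1) (2 * n) with hc2 | hc2
  · rw [Nat.mod_eq_of_lt hc1] at e1; rw [Nat.mod_eq_of_lt hc2] at e2; omega
  · rw [Nat.mod_eq_of_lt hc1] at e1
    have : k.val + 1 = 2 * n := by omega
    rw [this, Nat.mod_self] at e2; omega
  · rw [Nat.mod_eq_of_lt hc2] at e2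
    have : k'.val + 1 = 2 * n := by omega
    rw [this, Nat.mod_self] at e1; omega
  · omega

lemma deg_eq_filter (hn : 2 ≤ n) (a : OFGVertex n) :
    ((OFG n).neighborSet a).ncard
      = (Finset.univ.filter fun kk : Fin (2 * n) => MVValid (flip a.1 kk)).card := by
  rw [← Nat.card_coe_set_eq]
  have e : ((OFG n).neighborSet a) ≃ {kk : Fin (2 * n) // MVValid (flip a.1 kk)} := by
    refine Equiv.symm (Equiv.ofBijective
      (fun kk => ⟨⟨flip a.1 kk.1, kk.2⟩, (adj_iff a _).2 ⟨kk.1, rfl⟩⟩) ⟨?_, ?_⟩)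
    · rintro ⟨k1, hk1⟩ ⟨k2, hk2⟩ heq
      have : flip a.1 k1 = flip a.1 k2 := by
        have := congrArg (fun z => (z : OFGVertex n).1) (Subtype.mk_eq_mk.1 heq)
        simpa using this
      exact Subtype.ext (flip_inj hn a.1 this)
    · rintro ⟨b, hb⟩
      obtain ⟨k, hk⟩ := (adj_iff a b).1 hb
      refine ⟨⟨k, ?_⟩, ?_⟩
      · rw [← hk]; exact b.2
      · apply Subtype.ext
        apply Subtype.ext
        simpa using hk.symm
  rw [Nat.card_congr e, Nat.card_eq_fintype_card, Fintype.card_subtype]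

lemma deg_formula [NeZero (2 * n)] (hn : 2 ≤ n) (a : OFGVertex n) (h2 : ∑ i, (a.1 i : ℤ) = 2) :
    ((OFG n).neighborSet a).ncard = n + 1 + cBnd (Mset a.1) := by
  rw [deg_eq_filter hn a]
  have hM : (Mset a.1).card = n - 1 := by
    have hs := sum_eq_card a.1
    rw [h2] at hs
    have hle : (Mset a.1).card ≤ 2 * n := by
      calc (Mset a.1).card ≤ Finset.univ.card := Finset.card_filter_le _ _
      _ = 2 * n := by rw [Finset.card_univ, Fintype.card_fin]
    omega
  -- rewrite the filter via the validity characterization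
  have hfc : (Finset.univ.filter fun kk : Fin (2 * n) => MVValid (flip a.1 kk))
      = Finset.univ.filter fun kk : Fin (2 * n) =>
          ¬((a.1 kk : ℤ) = -1 ∧ (a.1 (nextCrease kk) : ℤ) = -1) := by
    apply Finset.filter_congr
    intro kk _
    exact valid_flip_iff_pos hn h2 kk
  rw [hfc]
  have hsplit := Finset.card_filter_add_card_filter_not
    (s := (Finset.univ : Finset (Fin (2 * n))))
    (p := fun kk => (a.1 kk : ℤ) = -1 ∧ (a.1 (nextCrease kk) : ℤ) = -1)
  rw [Finset.card_univ, Fintype.card_fin] at hsplit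
  -- the positive filter equals M.filter (· + 1 ∈ M)
  have hpos : (Finset.univ.filter fun kk : Fin (2 * n) =>
        (a.1 kk : ℤ) = -1 ∧ (a.1 (nextCrease kk) : ℤ) = -1)
      = (Mset a.1).filter (fun kk => kk + 1 ∈ Mset a.1) := by
    unfold Mset
    rw [Finset.filter_filter]
    apply Finset.filter_congr
    intro kk _
    simp only [Finset.mem_filter, Finset.mem_univ, true_and, eq_iff_iff]
    rw [← nextCrease_eq_add_one hn kk]
  have hMsplit := Finset.card_filter_add_card_filter_not
    (s := Mset a.1) (p := fun kk => kk + 1 ∈ Mset a.1)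
  have hcB : cBnd (Mset a.1) = ((Mset a.1).filter fun kk => kk + 1 ∉ Mset a.1).card := rfl
  have hcB_le : cBnd (Mset a.1) ≤ (Mset a.1).card := by
    rw [hcB]; exact Finset.card_filter_le _ _
  rw [hpos] at hsplit
  omega
end Graph2



section Graph3
variable {n : ℕ}



def negA (μ : MVAssign n) : MVAssign n := fun i => negE (μ i)

lemma sum_negA (μ : MVAssign n) : ∑ i, (negA μ i : ℤ) = -∑ i, (μ i : ℤ) := by
  rw [← Finset.sum_neg_distrib]
  exact Finset.sum_congr rfl fun i _ => rfl

lemma valid_negA (μ : MVAssign n) : MVValid (negA μ) ↔ MVValid μ := by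
  unfold MVValid
  rw [sum_negA]
  constructor <;> rintro (h | h) <;> [right; left; right; left] <;> linarith

lemma negA_negA (μ : MVAssign n) : negA (negA μ) = μ :=
  funext fun i => negE_negE (μ i)

lemma flip_negA (μ : MVAssign n) (k : Fin (2 * n)) :
    flip (negA μ) k = negA (flip μ k) := by
  funext i
  unfold flip negA
  by_cases h : i = k ∨ i = nextCrease k
  · simp only [if_pos h]
  · simp only [if_neg h]

def negV (a : OFGVertex n) : OFGVertex n :=
  ⟨negA a.1, (valid_negA a.1).2 a.2⟩

lemma deg_negV (hn : 2 ≤ n) (a : OFGVertex n) :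
    ((OFG n).neighborSet (negV a)).ncard = ((OFG n).neighborSet a).ncard := by
  rw [deg_eq_filter hn, deg_eq_filter hn]
  congr 1
  apply Finset.filter_congr
  intro kk _
  show MVValid (flip (negV a).1 kk) ↔ MVValid (flip a.1 kk)
  rw [show (negV a).1 = negA a.1 from rfl, flip_negA]
  exact valid_negA _

/-- vertices with positive sum and given boundary count biject with cyclic subsets -/
lemma count_pos_eq (hn : 2 ≤ n) [NeZero (2 * n)] (k : ℕ) (hk₁ : n + 2 ≤ k) (hk₂ : k ≤ 2 * n) :
    (Finset.univ.filter fun a : OFGVertex n =>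
        ((OFG n).neighborSet a).ncard = k ∧ ∑ i, (a.1 i : ℤ) = 2).card
      = ccnt (2 * n) (n - 1) (k - n - 1) := by
  unfold ccnt
  apply Finset.card_bij (fun a _ => Mset a.1)
  · rintro a ha
    simp only [Finset.mem_filter, Finset.mem_univ, true_and] at ha ⊢
    obtain ⟨hdeg, hsum⟩ := ha
    have hM : (Mset a.1).card = n - 1 := by
      have hs := sum_eq_card a.1
      rw [hsum] at hs
      have hle : (Mset a.1).card ≤ 2 * n := by
        calc (Mset a.1).card ≤ Finset.univ.card := Finset.card_filter_le _ _
        _ = 2 * n := by rw [Finset.card_univ, Fintype.card_fin]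
      omega
    refine ⟨hM, ?_⟩
    have := deg_formula hn a hsum
    rw [this] at hdeg
    omega
  · rintro a1 h1 a2 h2 heq
    apply Subtype.ext
    funext i
    apply Subtype.ext
    have hmem : i ∈ Mset a1.1 ↔ i ∈ Mset a2.1 := by rw [heq]
    unfold Mset at hmem
    simp only [Finset.mem_filter, Finset.mem_univ, true_and] at hmem
    rcases val_pm (a1.1 i) with hv1 | hv1 <;> rcases val_pm (a2.1 i) with hv2 | hv2 <;>
      rw [hv1, hv2] <;> first | rfl | (exfalso; revert hmem; rw [hv1, hv2]; norm_num)
  · rintro S hS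
    simp only [Finset.mem_filter, Finset.mem_univ, true_and] at hS
    obtain ⟨hcard, hB⟩ := hS
    set μS : MVAssign n := fun i =>
      if i ∈ S then (⟨-1, by simp⟩ : ({-1,1} : Finset ℤ)) else ⟨1, by simp⟩ with hμS
    have hMS : Mset μS = S := by
      ext i
      unfold Mset
      simp only [Finset.mem_filter, Finset.mem_univ, true_and, hμS]
      by_cases h : i ∈ S
      · simp [h]
      · simp [h]
    have hsum : ∑ i, (μS i : ℤ) = 2 := by
      have hs := sum_eq_card μS
      rw [hMS, hcard] at hs
      have : ((n : ℤ) - 1) = ((n - 1 : ℕ) : ℤ) := by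
        have : 1 ≤ n := by omega
        push_cast [this]
        ring
      rw [hs]
      omega
    refine ⟨⟨μS, Or.inl hsum⟩, ?_, hMS⟩
    simp only [Finset.mem_filter, Finset.mem_univ, true_and]
    refine ⟨?_, hsum⟩
    rw [deg_formula hn ⟨μS, Or.inl hsum⟩ hsum, hMS, hB]
    omega
end Graph3



section Final

lemma negV_negV {n : ℕ} (a : OFGVertex n) : negV (negV a) = a :=
  Subtype.ext (negA_negA a.1)

theorem stmt12_main (n k : ℕ) (hn : 2 ≤ n) (hk₁ : n + 2 ≤ k) (hk₂ : k ≤ 2 * n) :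
    (({a : OFGVertex n | ((OFG n).neighborSet a).ncard = k} : Set (OFGVertex n)).ncard : ℚ)
      = (4 * n / (n + 1)) * (Nat.choose (n + 1) (k - n - 1))
          * (Nat.choose (n - 2) (k - n - 2)) := by
  haveI : NeZero (2 * n) := ⟨by omega⟩
  have h1 : ({a : OFGVertex n | ((OFG n).neighborSet a).ncard = k}).ncard
      = (Finset.univ.filter fun a : OFGVertex n =>
          ((OFG n).neighborSet a).ncard = k).card := by
    rw [← Nat.card_coe_set_eq, Set.coe_setOf, Nat.card_eq_fintype_card,
      Fintype.card_subtype]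
  have hunion : (Finset.univ.filter fun a : OFGVertex n =>
        ((OFG n).neighborSet a).ncard = k)
      = (Finset.univ.filter fun a : OFGVertex n =>
          ((OFG n).neighborSet a).ncard = k ∧ ∑ i, (a.1 i : ℤ) = 2)
        ∪ (Finset.univ.filter fun a : OFGVertex n =>
          ((OFG n).neighborSet a).ncard = k ∧ ∑ i, (a.1 i : ℤ) = -2) := by
    ext a
    simp only [Finset.mem_union, Finset.mem_filter, Finset.mem_univ, true_and]
    have hv := a.2
    unfold MVValid at hv
    tauto
  have hdisj : Disjoint
      (Finset.univ.filter fun a : OFGVertex n =>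
          ((OFG n).neighborSet a).ncard = k ∧ ∑ i, (a.1 i : ℤ) = 2)
      (Finset.univ.filter fun a : OFGVertex n =>
          ((OFG n).neighborSet a).ncard = k ∧ ∑ i, (a.1 i : ℤ) = -2) := by
    rw [Finset.disjoint_left]
    rintro a ha hb
    simp only [Finset.mem_filter, Finset.mem_univ, true_and] at ha hb
    have := ha.2
    have := hb.2
    omega
  have hneg : (Finset.univ.filter fun a : OFGVertex n =>
        ((OFG n).neighborSet a).ncard = k ∧ ∑ i, (a.1 i : ℤ) = -2).card
      = (Finset.univ.filter fun a : OFGVertex n =>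
        ((OFG n).neighborSet a).ncard = k ∧ ∑ i, (a.1 i : ℤ) = 2).card := by
    apply Finset.card_bij' (fun a _ => negV a) (fun a _ => negV a)
    · rintro a ha
      simp only [Finset.mem_filter, Finset.mem_univ, true_and] at ha ⊢
      refine ⟨by rw [deg_negV hn]; exact ha.1, ?_⟩
      have := sum_negA a.1
      show ∑ i, (negA a.1 i : ℤ) = 2
      rw [this, ha.2]
      ring
    · rintro a ha
      simp only [Finset.mem_filter, Finset.mem_univ, true_and] at ha ⊢
      refine ⟨by rw [deg_negV hn]; exact ha.1, ?_⟩
      have := sum_negA a.1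
      show ∑ i, (negA a.1 i : ℤ) = -2
      rw [this, ha.2]
    · rintro a _; exact negV_negV a
    · rintro a _; exact negV_negV a
  have hcount := count_pos_eq hn k hk₁ hk₂
  set b := k - n - 1 with hbdef
  have hclosed := ccnt_closed (N := 2 * n) (by omega)
    (show 1 ≤ b by omega) (show 1 ≤ n - 1 by omega) (show n - 1 ≤ 2 * n - 1 by omega)
  have e1 : 2 * n - (n - 1) = n + 1 := by omega
  have e2 : n - 1 - 1 = n - 2 := by omega
  rw [e1, e2] at hclosed
  -- total count
  have htot : ({a : OFGVertex n | ((OFG n).neighborSet a).ncard = k}).ncard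
      = 2 * ccnt (2 * n) (n - 1) b := by
    rw [h1, hunion, Finset.card_union_of_disjoint hdisj, hneg, hcount]
    ring
  rw [htot]
  have hQ : (ccnt (2 * n) (n - 1) b : ℚ) * ((n : ℚ) + 1)
      = 2 * n * ((n - 2).choose (b - 1) * (n + 1).choose b) := by
    have := congrArg (fun x : ℕ => (x : ℚ)) hclosed
    push_cast at this
    convert this using 2 <;> push_cast <;> ring
  have hn1 : ((n : ℚ) + 1) ≠ 0 := by positivity
  have e3 : k - n - 2 = b - 1 := by omega
  rw [e3]
  push_cast
  rw [div_mul_eq_mul_div, div_mul_eq_mul_div, eq_div_iff hn1]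
  linear_combination 2 * hQ

end Final

end Stmt12

/-- For `n ≥ 2` and `n+2 ≤ k ≤ 2n`, the number of valid MV assignments of
`A_{2n}` of degree exactly `k` in `OFG(A_{2n})` is
`(4n/(n+1)) · C(n+1, k-n-1) · C(n-2, k-n-2)`. -/
theorem stmt_12 (n k : ℕ) (hn : 2 ≤ n) (hk₁ : n + 2 ≤ k) (hk₂ : k ≤ 2 * n) :
    (({a : OFGVertex n | ((OFG n).neighborSet a).ncard = k} : Set (OFGVertex n)).ncard : ℚ)
      = (4 * n / (n + 1)) * (Nat.choose (n + 1) (k - n - 1))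
          * (Nat.choose (n - 2) (k - n - 2)) := by
  exact Stmt12.stmt12_main n k hn hk₁ hk₂
end
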